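/- arXiv:1401.6092 — 8 statements merged into one kernel-verified Lean document; each statement's English description precedes it below -/
import Mathlib

section
/- For the simple line with n nodes and uniform weight vector, the non-normalized PageRank of node i is R_i = (1 - c^{n-i+1})/(1 - c), i.e., the i-th entry of (I - cA^T)^{-1} applied to the all-ones vector equals the geometric sum 1 + c + ... + c^{n-i}. -/
open Matrix

/-- For the simple line with `n` nodes and uniform weight vector, the non-normalized
PageRank of node `i` (node numbers `1,…,n`, here index `i : Fin n` is node `i+1`) is
`(1 - c^(n-i))/(1-c)`, i.e. the geometric sum `1 + c + ⋯ + c^(n-i-1)`. -/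
theorem line_pagerank (n : ℕ) (c : ℝ) (hc0 : 0 < c) (hc1 : c < 1)
    (A : Matrix (Fin n) (Fin n) ℝ)
    (hA : ∀ i j : Fin n, A i j = if (i : ℕ) = (j : ℕ) + 1 then 1 else 0)
    (R : Fin n → ℝ)
    (hR : R = (1 - c • A.transpose)⁻¹ *ᵥ fun _ => 1) :
    ∀ i : Fin n, R i = (1 - c ^ (n - (i : ℕ))) / (1 - c) := by
  have hc : (1 : ℝ) - c ≠ 0 := by linarith
  set M : Matrix (Fin n) (Fin n) ℝ := 1 - c • A.transpose with hMdef
  have hM : ∀ i j : Fin n, M i j =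
      (if j = i then (1:ℝ) else 0) - c * (if (j : ℕ) = (i : ℕ) + 1 then 1 else 0) := by
    intro i j
    simp [hMdef, Matrix.one_apply, Matrix.transpose_apply, hA j i, eq_comm]
  set f : Fin n → ℝ := fun i => (1 - c ^ (n - (i : ℕ))) / (1 - c) with hf
  have hBT : M.BlockTriangular id := by
    intro i j hij
    rw [hM]
    have h1 : ¬ (j = i) := by
      intro h; subst h; exact lt_irrefl _ hij
    have h2 : ¬ ((j : ℕ) = (i : ℕ) + 1) := by
      have : (j : ℕ) < (i : ℕ) := hij
      omega
    simp [h1, h2]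
  have hdet : M.det = 1 := by
    rw [Matrix.det_of_upperTriangular hBT]
    have : ∀ i : Fin n, M i i = 1 := by
      intro i
      rw [hM]
      simp
    simp [this]
  have hunit : IsUnit M.det := by rw [hdet]; exact isUnit_one
  have key : M *ᵥ f = fun _ => 1 := by
    funext i
    rw [Matrix.mulVec, dotProduct]
    have hterm : ∀ j : Fin n, M i j * f j =
        (if j = i then f j else 0) - c * (if (j : ℕ) = (i : ℕ) + 1 then f j else 0) := by
      intro j
      rw [hM]
      split_ifs <;> ring
    rw [Finset.sum_congr rfl (fun j _ => hterm j), Finset.sum_sub_distrib]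
    rw [Finset.sum_ite_eq' Finset.univ i f]
    simp only [Finset.mem_univ, if_true]
    rw [← Finset.mul_sum]
    by_cases hi : (i : ℕ) + 1 < n
    · set j0 : Fin n := ⟨(i : ℕ) + 1, hi⟩ with hj0
      have hcond : ∀ j : Fin n, ((j : ℕ) = (i : ℕ) + 1) ↔ j = j0 := by
        intro j; rw [Fin.ext_iff]
      have hsum : (∑ j : Fin n, if (j : ℕ) = (i : ℕ) + 1 then f j else 0) = f j0 := by
        rw [Finset.sum_congr rfl (fun j _ => by rw [if_congr (hcond j) rfl rfl])]
        rw [Finset.sum_ite_eq' Finset.univ j0 f]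
        simp
      rw [hsum, hf]
      have hk : n - (i : ℕ) = (n - ((i : ℕ) + 1)) + 1 := by omega
      simp only [hj0]
      rw [hk]
      set k := n - ((i : ℕ) + 1)
      field_simp
      ring
    · have hsum : (∑ j : Fin n, if (j : ℕ) = (i : ℕ) + 1 then f j else 0) = 0 := by
        apply Finset.sum_eq_zero
        intro j _
        have : (j : ℕ) ≠ (i : ℕ) + 1 := by have := j.isLt; omega
        simp [this]
      rw [hsum, hf]
      have h1 : n - (i : ℕ) = 1 := by omega
      simp only [h1, pow_one]
      field_simp
      ring
  have hRf : R = f := by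
    rw [hR, ← key, Matrix.mulVec_mulVec, Matrix.nonsing_inv_mul M hunit, Matrix.one_mulVec]
  intro i
  rw [hRf]
end

section
/- Consider the complete graph on n ≥ 2 nodes where node 1 additionally links out of the graph (so node 1 has n outgoing links of weight 1/n each, of which n-1 go to the other graph nodes, and every other node has n-1 links of weight 1/(n-1) to the others). Then the non-normalized PageRank of node 1 is (n(n-1) + nc)/(n(n-1) - (n-1)c² - n(n-2)c), and that of every other node i is ((c+n)(n-1))/(n(n-1) - (n-1)c² - n(n-2)c). -/
open Matrix

/-- Complete graph on `n ≥ 2` nodes where node `1` (index `0`) additionally links out: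
node `1` has `n` outgoing links of weight `1/n` (of which `n-1` stay in the graph),
each other node has `n-1` links of weight `1/(n-1)`. The non-normalized PageRank of
node `1` is `(n(n-1)+nc)/(n(n-1)-(n-1)c²-n(n-2)c)` and of every other node is
`((c+n)(n-1))/(n(n-1)-(n-1)c²-n(n-2)c)`. -/
theorem complete_graph_one_link_out_pagerank (n : ℕ) (hn : 2 ≤ n) (c : ℝ)
    (hc0 : 0 < c) (hc1 : c < 1)
    (A : Matrix (Fin n) (Fin n) ℝ)
    (hA : ∀ i j : Fin n, A i j =
      if i = j then 0 else if (i : ℕ) = 0 then 1 / (n : ℝ) else 1 / ((n : ℝ) - 1))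
    (R : Fin n → ℝ)
    (hR : R = (1 - c • A.transpose)⁻¹ *ᵥ fun _ => 1) :
    (∀ i : Fin n, (i : ℕ) = 0 →
        R i = ((n : ℝ) * ((n : ℝ) - 1) + (n : ℝ) * c) /
          ((n : ℝ) * ((n : ℝ) - 1) - ((n : ℝ) - 1) * c ^ 2 -
            (n : ℝ) * ((n : ℝ) - 2) * c)) ∧
    (∀ i : Fin n, (i : ℕ) ≠ 0 →
        R i = ((c + (n : ℝ)) * ((n : ℝ) - 1)) /
          ((n : ℝ) * ((n : ℝ) - 1) - ((n : ℝ) - 1) * c ^ 2 -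
            (n : ℝ) * ((n : ℝ) - 2) * c)) := by
  have hn0 : 0 < n := by omega
  set N : ℝ := (n : ℝ) with hNdef
  have hN2 : (2:ℝ) ≤ N := by rw [hNdef]; exact_mod_cast hn
  have hN0 : (0:ℝ) < N := by linarith
  have hN1 : (0:ℝ) < N - 1 := by linarith
  have hD : 0 < N * (N - 1) - (N - 1) * c ^ 2 - N * (N - 2) * c := by
    have hcc : c ^ 2 ≤ c := by nlinarith
    have hx : (0:ℝ) < N ^ 2 - N - 1 := by nlinarith
    have hy : c * (N ^ 2 - N - 1) < N ^ 2 - N - 1 := (mul_lt_iff_lt_one_left hx).mpr hc1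
    have hz : (N - 1) * c ^ 2 ≤ (N - 1) * c := by nlinarith
    nlinarith [hy, hz]
  set D := N * (N - 1) - (N - 1) * c ^ 2 - N * (N - 2) * c with hDdef
  set a := (N * (N - 1) + N * c) / D with hadef
  set b := ((c + N) * (N - 1)) / D with hbdef
  set z : Fin n := ⟨0, hn0⟩ with hzdef
  have hzeq : ∀ j : Fin n, j = z ↔ (j : ℕ) = 0 := fun j => by
    rw [Fin.ext_iff]
  set M := (1 : Matrix (Fin n) (Fin n) ℝ) - c • A.transpose with hMdef
  have hM : ∀ i j, M i j = (if i = j then (1:ℝ) else 0) - c * A j i := by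
    intro i j
    simp [hMdef, Matrix.one_apply, Matrix.sub_apply]
  have hdiag : ∀ k, M k k = 1 := fun k => by rw [hM]; simp [hA k k]
  have hrow : ∀ k j : Fin n, j ≠ k → M k j = - (c * A j k) := by
    intro k j hjk
    rw [hM, if_neg (Ne.symm hjk), zero_sub]
  have hcard1 : (Finset.univ.erase z : Finset (Fin n)).card = n - 1 := by
    rw [Finset.card_erase_of_mem (Finset.mem_univ z), Finset.card_univ, Fintype.card_fin]
  have hcast1 : ((n - 1 : ℕ) : ℝ) = N - 1 := by
    rw [Nat.cast_sub (by omega)]; simp [hNdef]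
  have hcast2 : ((n - 2 : ℕ) : ℝ) = N - 2 := by
    rw [Nat.cast_sub (by omega)]; simp [hNdef]
  -- the value of A at off-diagonal entries
  have hAz : ∀ j : Fin n, j ≠ z → A j z = 1 / (N - 1) := by
    intro j hj
    rw [hA, if_neg hj, if_neg (fun h => hj ((hzeq j).mpr h))]
  have hAzk : ∀ k : Fin n, k ≠ z → A z k = 1 / N := by
    intro k hk
    rw [hA, if_neg (Ne.symm hk), if_pos rfl]
  have hAjk : ∀ k j : Fin n, k ≠ z → j ≠ z → j ≠ k → A j k = 1 / (N - 1) := by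
    intro k j _ hjz hjk
    rw [hA, if_neg hjk, if_neg (fun h => hjz ((hzeq j).mpr h))]
  -- determinant is nonzero via strict diagonal dominance
  have hdet : M.det ≠ 0 := by
    apply det_ne_zero_of_sum_row_lt_diag
    intro k
    rw [hdiag k, norm_one]
    by_cases hk : k = z
    · subst hk
      have hconst : ∀ j ∈ Finset.univ.erase z, ‖M z j‖ = c / (N - 1) := by
        intro j hj
        have hjz : j ≠ z := Finset.ne_of_mem_erase hj
        rw [hrow z j hjz, hAz j hjz, norm_neg, Real.norm_eq_abs,
          abs_of_pos (by positivity), mul_one_div]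
      rw [Finset.sum_congr rfl hconst, Finset.sum_const, hcard1, nsmul_eq_mul, hcast1]
      calc (N - 1) * (c / (N - 1)) = c := by field_simp
        _ < 1 := hc1
    · have hzk : z ∈ Finset.univ.erase k := Finset.mem_erase.mpr ⟨Ne.symm hk, Finset.mem_univ z⟩
      rw [← Finset.add_sum_erase _ _ hzk]
      have h1 : ‖M k z‖ = c / N := by
        rw [hrow k z (Ne.symm hk), hAzk k hk, norm_neg, Real.norm_eq_abs,
          abs_of_pos (by positivity), mul_one_div]
      have hconst : ∀ j ∈ (Finset.univ.erase k).erase z, ‖M k j‖ = c / (N - 1) := by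
        intro j hj
        have hjz : j ≠ z := Finset.ne_of_mem_erase hj
        have hjk : j ≠ k := Finset.ne_of_mem_erase (Finset.mem_of_mem_erase hj)
        rw [hrow k j hjk, hAjk k j hk hjz hjk, norm_neg, Real.norm_eq_abs,
          abs_of_pos (by positivity), mul_one_div]
      have hcard2 : ((Finset.univ.erase k).erase z).card = n - 2 := by
        rw [Finset.card_erase_of_mem hzk, Finset.card_erase_of_mem (Finset.mem_univ k),
          Finset.card_univ, Fintype.card_fin]
        omega
      rw [h1, Finset.sum_congr rfl hconst, Finset.sum_const, hcard2, nsmul_eq_mul, hcast2]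
      calc c / N + (N - 2) * (c / (N - 1))
          ≤ c / (N - 1) + (N - 2) * (c / (N - 1)) := by
            gcongr
            linarith
        _ = c := by field_simp; ring
        _ < 1 := hc1
  -- candidate vector
  set v : Fin n → ℝ := fun i => if (i : ℕ) = 0 then a else b with hvdef
  have hMv : M *ᵥ v = fun _ => (1:ℝ) := by
    funext i
    show ∑ j, M i j * v j = 1
    by_cases hi : i = z
    · subst hi
      rw [← Finset.add_sum_erase _ _ (Finset.mem_univ z)]
      have hconst : ∀ j ∈ Finset.univ.erase z, M z j * v j = -(c * (1 / (N - 1))) * b := by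
        intro j hj
        have hjz : j ≠ z := Finset.ne_of_mem_erase hj
        rw [hrow z j hjz, hAz j hjz, hvdef]
        simp only [if_neg (fun h => hjz ((hzeq j).mpr h))]
      rw [Finset.sum_congr rfl hconst, Finset.sum_const, hcard1, nsmul_eq_mul, hcast1,
        hdiag, one_mul, hvdef]
      simp only [if_pos (show ((z:Fin n) : ℕ) = 0 from rfl)]
      rw [hadef, hbdef, hDdef]
      field_simp
      rw [div_eq_one_iff_eq (by intro h; apply hD.ne'; rw [hDdef]; linarith [h])]
      ring
    · have hzk : z ∈ Finset.univ.erase i := Finset.mem_erase.mpr ⟨Ne.symm hi, Finset.mem_univ z⟩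
      rw [← Finset.add_sum_erase _ _ (Finset.mem_univ i), ← Finset.add_sum_erase _ _ hzk]
      have hconst : ∀ j ∈ (Finset.univ.erase i).erase z,
          M i j * v j = -(c * (1 / (N - 1))) * b := by
        intro j hj
        have hjz : j ≠ z := Finset.ne_of_mem_erase hj
        have hji : j ≠ i := Finset.ne_of_mem_erase (Finset.mem_of_mem_erase hj)
        rw [hrow i j hji, hAjk i j hi hjz hji, hvdef]
        simp only [if_neg (fun h => hjz ((hzeq j).mpr h))]
      have hcard2 : ((Finset.univ.erase i).erase z).card = n - 2 := by
        rw [Finset.card_erase_of_mem hzk, Finset.card_erase_of_mem (Finset.mem_univ i),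
          Finset.card_univ, Fintype.card_fin]
        omega
      rw [Finset.sum_congr rfl hconst, Finset.sum_const, hcard2, nsmul_eq_mul, hcast2,
        hdiag, one_mul, hrow i z (Ne.symm hi), hAzk i hi, hvdef]
      simp only [if_pos (show ((z:Fin n) : ℕ) = 0 from rfl),
        if_neg (fun h => hi ((hzeq i).mpr h))]
      rw [hadef, hbdef, hDdef]
      field_simp
      rw [div_eq_one_iff_eq (by intro h; apply hD.ne'; rw [hDdef]; linarith [h])]
      ring
  have hvR : R = v := by
    rw [hR, ← hMv, mulVec_mulVec, Matrix.nonsing_inv_mul M (isUnit_iff_ne_zero.mpr hdet),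
      Matrix.one_mulVec]
  refine ⟨fun i hi => ?_, fun i hi => ?_⟩ <;>
    rw [hvR] <;> simp only [hvdef, hi, if_pos, if_neg, ite_true, ite_false, if_true]
end

section
/- Probabilistic interpretation of PageRank: for a graph with substochastic transition matrix cA (walk follows a link with total probability c, stops with probability 1-c), the non-normalized PageRank satisfies R_j = (Σ_{i≠j} P(i→j) + 1) · Σ_{k=0}^∞ (P(j→j))^k, where P(i→j) is the probability that a walk started at i ever visits j. Equivalently, R_j = Σ_{k=0}^∞ Σ_i ((cA^T)^k)_{ji}. -/
open Matrix

/-- Probabilistic interpretation of PageRank: for a walk with substochastic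
transition matrix `cA` (follow a link with probability `c`, stop with probability
`1-c`), the non-normalized PageRank `R = (I - cAᵀ)⁻¹ e` satisfies
`R j = (Σ_{i≠j} P(i→j) + 1) · Σ_k P(j→j)^k`, where `P i j` is the probability that
the walk started at `i` ever visits `j` (at a step `≥ 1`), obtained as the limit of
the probabilities `Q k i j` of hitting `j` within `k` steps. Equivalently,
`R j = Σ_k Σ_i ((cAᵀ)^k)_{j i}`. -/
theorem pagerank_probabilistic_interpretation (n : ℕ) (c : ℝ)
    (hc0 : 0 < c) (hc1 : c < 1)
    (A : Matrix (Fin n) (Fin n) ℝ)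
    (hA_nonneg : ∀ i j : Fin n, 0 ≤ A i j)
    (hA_rows : ∀ i : Fin n, ∑ j, A i j = 1)
    (R : Fin n → ℝ)
    (hR : R = (1 - c • A.transpose)⁻¹ *ᵥ fun _ => 1)
    (Q : ℕ → Fin n → Fin n → ℝ)
    (hQ0 : ∀ i j : Fin n, Q 0 i j = 0)
    (hQsucc : ∀ (k : ℕ) (i j : Fin n),
      Q (k + 1) i j = c * ∑ l, A i l * (if l = j then 1 else Q k l j))
    (P : Fin n → Fin n → ℝ)
    (hP : ∀ i j : Fin n,
      Filter.Tendsto (fun k => Q k i j) Filter.atTop (nhds (P i j))) :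
    ∀ j : Fin n,
      R j = ((∑ i ∈ Finset.univ.filter (fun i => i ≠ j), P i j) + 1) *
              (∑' k : ℕ, (P j j) ^ k) ∧
      R j = ∑' k : ℕ, ∑ i, ((c • A.transpose) ^ k) j i := by
  intro j
  set M : Matrix (Fin n) (Fin n) ℝ := c • A with hMdef
  have hM_apply : ∀ i l, M i l = c * A i l := fun i l => rfl
  have hM_nonneg : ∀ i l, 0 ≤ M i l := fun i l =>
    mul_nonneg hc0.le (hA_nonneg i l)
  have hpow_nonneg : ∀ k i l, 0 ≤ (M ^ k) i l := by
    intro k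
    induction k with
    | zero => intro i l; rw [pow_zero, Matrix.one_apply]; split <;> norm_num
    | succ k ih =>
      intro i l
      rw [pow_succ', Matrix.mul_apply]
      exact Finset.sum_nonneg fun x _ => mul_nonneg (hM_nonneg i x) (ih x l)
  have hpow_rowsum : ∀ k i, ∑ l, (M ^ k) i l = c ^ k := by
    intro k
    induction k with
    | zero => intro i; simp [Matrix.one_apply]
    | succ k ih =>
      intro i
      simp only [pow_succ', Matrix.mul_apply]
      rw [Finset.sum_comm]
      calc ∑ x, ∑ l, M i x * (M ^ k) x l
          = ∑ x, M i x * c ^ k := by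
            refine Finset.sum_congr rfl fun x _ => ?_
            rw [← Finset.mul_sum, ih x]
        _ = c * c ^ k := by
            rw [← Finset.sum_mul]
            congr 1
            simp only [hM_apply, ← Finset.mul_sum, hA_rows, mul_one]
  have hpow_le : ∀ k i l, (M ^ k) i l ≤ c ^ k := by
    intro k i l
    have := Finset.single_le_sum (f := fun l => (M ^ k) i l)
      (fun x _ => hpow_nonneg k i x) (Finset.mem_univ l)
    rwa [hpow_rowsum k i] at this
  have hsumM : ∀ i l, Summable fun k => (M ^ k) i l := fun i l =>
    Summable.of_nonneg_of_le (fun k => hpow_nonneg k i l) (fun k => hpow_le k i l)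
      (summable_geometric_of_lt_one hc0.le hc1)
  set S : Matrix (Fin n) (Fin n) ℝ := Matrix.of (fun i l => ∑' k, (M ^ k) i l) with hSdef
  have hS_apply : ∀ i l, S i l = ∑' k, (M ^ k) i l := fun i l => rfl
  have hSM : S * (1 - M) = 1 := by
    ext i l
    rw [Matrix.mul_sub, Matrix.mul_one, Matrix.sub_apply]
    have h1 : (S * M) i l = ∑' k, (M ^ (k + 1)) i l := by
      rw [Matrix.mul_apply]
      calc ∑ x, S i x * M x l
          = ∑ x, ∑' k, (M ^ k) i x * M x l := by
            refine Finset.sum_congr rfl fun x _ => ?_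
            rw [hS_apply, tsum_mul_right]
        _ = ∑' k, ∑ x, (M ^ k) i x * M x l := by
            rw [Summable.tsum_finsetSum]
            intro x _
            exact ((hsumM i x).mul_right _)
        _ = ∑' k, (M ^ (k + 1)) i l := by
            refine tsum_congr fun k => ?_
            rw [pow_succ, Matrix.mul_apply]
    have h2 : ∑' k, (M ^ k) i l = (M ^ 0) i l + ∑' k, (M ^ (k + 1)) i l :=
      Summable.tsum_eq_zero_add (hsumM i l)
    rw [h1, hS_apply]
    rw [h2, pow_zero]
    ring
  have hinv : (1 - c • A.transpose)⁻¹ = S.transpose := by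
    refine Matrix.inv_eq_right_inv ?_
    have h1 : (1 : Matrix (Fin n) (Fin n) ℝ) - c • A.transpose = (1 - M)ᵀ := by
      rw [Matrix.transpose_sub, Matrix.transpose_one, hMdef, Matrix.transpose_smul]
    rw [h1, ← Matrix.transpose_mul, hSM, Matrix.transpose_one]
  have hRj : R j = ∑ i, S i j := by
    rw [hR, hinv]
    simp [Matrix.mulVec, dotProduct, Matrix.transpose_apply]
  have hsecond : R j = ∑' k : ℕ, ∑ i, ((c • A.transpose) ^ k) j i := by
    have hT : ∀ k : ℕ, ∀ i, ((c • A.transpose) ^ k) j i = (M ^ k) i j := by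
      intro k i
      have : c • A.transpose = Mᵀ := by rw [hMdef, Matrix.transpose_smul]
      rw [this, ← Matrix.transpose_pow, Matrix.transpose_apply]
    rw [hRj]
    calc ∑ i, S i j = ∑ i, ∑' k, (M ^ k) i j := by rfl
      _ = ∑' k, ∑ i, (M ^ k) i j := (Summable.tsum_finsetSum fun i _ => hsumM i j).symm
      _ = ∑' k : ℕ, ∑ i, ((c • A.transpose) ^ k) j i := by
          refine tsum_congr fun k => Finset.sum_congr rfl fun i _ => (hT k i).symm
  refine ⟨?_, hsecond⟩
  -- basic facts about Q and P
  have hq_nn : ∀ (k : ℕ) (i j' : Fin n), 0 ≤ Q k i j' := by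
    intro k
    induction k with
    | zero => intro i j'; rw [hQ0]
    | succ k ih =>
      intro i j'
      rw [hQsucc]
      refine mul_nonneg hc0.le (Finset.sum_nonneg fun l _ =>
        mul_nonneg (hA_nonneg i l) ?_)
      split
      · norm_num
      · exact ih l j'
  have hq_le : ∀ (k : ℕ) (i j' : Fin n), Q k i j' ≤ c := by
    intro k
    induction k with
    | zero => intro i j'; rw [hQ0]; exact hc0.le
    | succ k ih =>
      intro i j'
      rw [hQsucc]
      have hb : ∑ l, A i l * (if l = j' then 1 else Q k l j') ≤ ∑ l, A i l := by
        refine Finset.sum_le_sum fun l _ => ?_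
        have h1 : (if l = j' then (1:ℝ) else Q k l j') ≤ 1 := by
          split
          · exact le_refl 1
          · exact (ih l j').trans hc1.le
        calc A i l * (if l = j' then (1:ℝ) else Q k l j') ≤ A i l * 1 :=
              mul_le_mul_of_nonneg_left h1 (hA_nonneg i l)
          _ = A i l := mul_one _
      rw [hA_rows i] at hb
      calc c * ∑ l, A i l * (if l = j' then (1:ℝ) else Q k l j') ≤ c * 1 :=
            mul_le_mul_of_nonneg_left hb hc0.le
        _ = c := mul_one c
  have hp_nn : ∀ i j', 0 ≤ P i j' := fun i j' =>
    ge_of_tendsto' (hP i j') (fun k => hq_nn k i j')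
  have hp_le : ∀ i j', P i j' ≤ c := fun i j' =>
    le_of_tendsto' (hP i j') (fun k => hq_le k i j')
  -- first-hitting-time increments
  set F : ℕ → Fin n → ℝ := fun m i => Q (m+1) i j - Q m i j with hFdef
  have hF0 : ∀ i, F 0 i = c * A i j := by
    intro i
    show Q 1 i j - Q 0 i j = c * A i j
    rw [hQ0, sub_zero, hQsucc]
    simp [hQ0, mul_ite, mul_one, mul_zero, Finset.sum_ite_eq']
  have hFsucc : ∀ m i, F (m+1) i = c * ∑ l, A i l * (if l = j then 0 else F m l) := by
    intro m i
    show Q (m+2) i j - Q (m+1) i j = _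
    rw [hQsucc (m+1), hQsucc m, ← mul_sub, ← Finset.sum_sub_distrib]
    congr 1
    refine Finset.sum_congr rfl fun l _ => ?_
    rw [← mul_sub]
    congr 1
    by_cases h : l = j
    · simp [h]
    · simp only [if_neg h]; rfl
  have hF_nonneg : ∀ m i, 0 ≤ F m i := by
    intro m
    induction m with
    | zero => intro i; rw [hF0]; exact mul_nonneg hc0.le (hA_nonneg i j)
    | succ m ih =>
      intro i
      rw [hFsucc]
      refine mul_nonneg hc0.le (Finset.sum_nonneg fun l _ =>
        mul_nonneg (hA_nonneg i l) ?_)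
      split
      · exact le_refl 0
      · exact ih l
  -- the renewal decomposition
  have hkey : ∀ (k : ℕ) (i : Fin n),
      (M ^ (k+1)) i j = ∑ m ∈ Finset.range (k+1), F m i * (M ^ (k-m)) j j := by
    intro k
    induction k with
    | zero =>
      intro i
      rw [Finset.sum_range_one, hF0]
      simp [pow_one, pow_zero, Matrix.one_apply_eq, hM_apply]
    | succ k ih =>
      intro i
      rw [pow_succ', Matrix.mul_apply]
      calc ∑ l, M i l * (M ^ (k+1)) l j
          = ∑ l, (M i l * (if l = j then (M ^ (k+1)) j j else 0)
              + ∑ m ∈ Finset.range (k+1),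
                  (M i l * (if l = j then 0 else F m l)) * (M ^ (k-m)) j j) := by
            refine Finset.sum_congr rfl fun l _ => ?_
            by_cases h : l = j
            · subst h
              simp
            · simp only [if_neg h, mul_zero, zero_add]
              rw [ih l, Finset.mul_sum]
              exact Finset.sum_congr rfl fun m _ => by ring
        _ = M i j * (M ^ (k+1)) j j
            + ∑ m ∈ Finset.range (k+1),
                (∑ l, M i l * (if l = j then 0 else F m l)) * (M ^ (k-m)) j j := by
            rw [Finset.sum_add_distrib]
            congr 1
            · simp [mul_ite, mul_zero, Finset.sum_ite_eq']
            · rw [Finset.sum_comm]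
              exact Finset.sum_congr rfl fun m _ => by rw [Finset.sum_mul]
        _ = F 0 i * (M ^ (k+1)) j j
            + ∑ m ∈ Finset.range (k+1), F (m+1) i * (M ^ (k-m)) j j := by
            congr 1
            · rw [hF0, hM_apply]
            · refine Finset.sum_congr rfl fun m _ => ?_
              congr 1
              rw [hFsucc]
              rw [Finset.mul_sum]
              refine Finset.sum_congr rfl fun l _ => ?_
              rw [hM_apply]
              ring
        _ = ∑ m ∈ Finset.range (k+2), F m i * (M ^ (k+1-m)) j j := by
            rw [Finset.sum_range_succ' (fun m => F m i * (M ^ (k+1-m)) j j) (k+1),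
              add_comm, Nat.sub_zero]
            congr 1
            refine Finset.sum_congr rfl fun m _ => ?_
            have h4 : k + 1 - (m + 1) = k - m := by omega
            rw [h4]
  -- sums of F converge to P
  have hFhas : ∀ i, HasSum (fun m => F m i) (P i j) := by
    intro i
    rw [hasSum_iff_tendsto_nat_of_nonneg (fun m => hF_nonneg m i)]
    have he : ∀ K, ∑ m ∈ Finset.range K, F m i = Q K i j := by
      intro K
      rw [hFdef, Finset.sum_range_sub (fun m => Q m i j), hQ0, sub_zero]
    simp only [he]
    exact hP i j
  -- Cauchy product: S i j = δ_{ij} + P i j * S j j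
  have key2 : ∀ i, S i j = (if i = j then (1:ℝ) else 0) + P i j * S j j := by
    intro i
    have hnF : Summable (fun m => ‖F m i‖) :=
      ((hFhas i).summable).congr
        (fun m => (Real.norm_of_nonneg (hF_nonneg m i)).symm)
    have hnG : Summable (fun r => ‖(M ^ r) j j‖) :=
      (hsumM j j).congr (fun r => (Real.norm_of_nonneg (hpow_nonneg r j j)).symm)
    have hC := tsum_mul_tsum_eq_tsum_sum_range_of_summable_norm hnF hnG
    rw [(hFhas i).tsum_eq] at hC
    have h3 : ∑' k, (M ^ (k+1)) i j = P i j * S j j := by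
      calc ∑' k, (M ^ (k+1)) i j
          = ∑' k, ∑ m ∈ Finset.range (k+1), F m i * (M ^ (k-m)) j j :=
            tsum_congr (fun k => hkey k i)
        _ = P i j * ∑' r, (M ^ r) j j := hC.symm
        _ = P i j * S j j := by rw [hS_apply]
    rw [hS_apply, Summable.tsum_eq_zero_add (hsumM i j), pow_zero, h3, Matrix.one_apply]
  have hSjj : S j j = 1 + P j j * S j j := by
    have h := key2 j
    simpa using h
  have hPjj1 : P j j < 1 := lt_of_le_of_lt (hp_le j j) hc1
  have hSpos : (0:ℝ) < 1 - P j j := sub_pos.mpr hPjj1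
  have hSjj' : S j j = (1 - P j j)⁻¹ := by
    have hmul : (1 - P j j) * S j j = 1 := by nlinarith [hSjj]
    exact eq_inv_of_mul_eq_one_right hmul
  have hgeom : ∑' k : ℕ, (P j j) ^ k = S j j := by
    rw [tsum_geometric_of_lt_one (hp_nn j j) hPjj1, hSjj']
  rw [hgeom, hRj]
  calc ∑ i, S i j
      = ∑ i, ((if i = j then (1:ℝ) else 0) + P i j * S j j) :=
        Finset.sum_congr rfl fun i _ => key2 i
    _ = 1 + ∑ i, P i j * S j j := by
        rw [Finset.sum_add_distrib]
        simp
    _ = 1 + (P j j * S j j + ∑ i ∈ Finset.univ.erase j, P i j * S j j) := by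
        rw [Finset.add_sum_erase Finset.univ (fun i => P i j * S j j) (Finset.mem_univ j)]
    _ = ((∑ i ∈ Finset.univ.filter (fun i => i ≠ j), P i j) + 1) * S j j := by
        rw [Finset.filter_ne', add_mul, one_mul, Finset.sum_mul]
        linarith [hSjj]
end

section
/- Simple line with an extra node linking to node j: the non-normalized PageRank of node i in the line (1 ≤ i ≤ n_L) is R_i = (1 - c^{n_L - i + 1})/(1-c) + b_{ij}, where b_{ij} = c^{j+1-i} if j ≥ i and b_{ij} = 0 if j < i, and the extra node has PageRank 1. -/
open Matrix

private lemma sum_if_coe {n : ℕ} (k : ℕ) (hk : k < n) (f : Fin n → ℝ) :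
    ∑ s : Fin n, (if (s : ℕ) = k then f s else 0) = f ⟨k, hk⟩ := by
  rw [Finset.sum_eq_single (⟨k, hk⟩ : Fin n)]
  · simp
  · intro b _ hb
    rw [if_neg]
    simpa [Fin.ext_iff] using hb
  · simp

/-- Simple line on nodes `1,…,nL` (indices `0,…,nL-1`) with one extra node
(index `nL`) linking to line node `j`: line node `i` (index `i-1`) has
non-normalized PageRank `(1-c^(nL-i+1))/(1-c) + b_{ij}` with `b_{ij} = c^(j+1-i)`
if `j ≥ i`, else `0`; the extra node has PageRank `1`. -/
theorem line_with_extra_node_pagerank (nL : ℕ) (hnL : 1 ≤ nL)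
    (j : ℕ) (hj1 : 1 ≤ j) (hj2 : j ≤ nL) (c : ℝ) (hc0 : 0 < c) (hc1 : c < 1)
    (A : Matrix (Fin (nL + 1)) (Fin (nL + 1)) ℝ)
    (hA : ∀ r s : Fin (nL + 1), A r s =
      if (r : ℕ) = (s : ℕ) + 1 ∧ (r : ℕ) < nL then 1
      else if (r : ℕ) = nL ∧ (s : ℕ) + 1 = j then 1 else 0)
    (R : Fin (nL + 1) → ℝ)
    (hR : R = (1 - c • A.transpose)⁻¹ *ᵥ fun _ => 1) :
    (∀ i : Fin (nL + 1), (i : ℕ) < nL →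
        R i = (1 - c ^ (nL - (i : ℕ))) / (1 - c) +
          (if (i : ℕ) + 1 ≤ j then c ^ (j - (i : ℕ)) else 0)) ∧
    (∀ i : Fin (nL + 1), (i : ℕ) = nL → R i = 1) := by
  have hc1' : (1 : ℝ) - c ≠ 0 := by linarith
  set M : Matrix (Fin (nL + 1)) (Fin (nL + 1)) ℝ := 1 - c • A.transpose with hMdef
  -- M is upper triangular with 1's on the diagonal
  have htri : M.BlockTriangular id := by
    intro p q hpq
    simp only [id] at hpq
    have hApq : A q p = 0 := by
      rw [hA, if_neg, if_neg]
      · rintro ⟨h1, h2⟩; omega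
      · rintro ⟨h1, h2⟩; omega
    have hne : p ≠ q := fun h => by subst h; exact lt_irrefl _ hpq
    simp [hMdef, Matrix.one_apply, hne, hApq]
  have hdiag : ∀ p : Fin (nL + 1), M p p = 1 := by
    intro p
    have hApp : A p p = 0 := by
      rw [hA, if_neg, if_neg]
      · rintro ⟨h1, h2⟩; omega
      · rintro ⟨h1, h2⟩
        have := p.isLt; omega
    simp [hMdef, Matrix.one_apply, hApp]
  have hdet : M.det = 1 := by
    rw [Matrix.det_of_upperTriangular htri]
    simp [hdiag]
  have hunit : IsUnit M.det := by rw [hdet]; exact isUnit_one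
  -- explicit solution vector
  set R0 : Fin (nL + 1) → ℝ := fun i =>
    if (i : ℕ) = nL then 1
    else (1 - c ^ (nL - (i : ℕ))) / (1 - c) +
      (if (i : ℕ) + 1 ≤ j then c ^ (j - (i : ℕ)) else 0) with hR0def
  -- check that M *ᵥ R0 = 1
  have hrow : ∀ i : Fin (nL + 1), (M *ᵥ R0) i = 1 := by
    intro i
    have hexp : (M *ᵥ R0) i = R0 i - c * ∑ s : Fin (nL + 1), A s i * R0 s := by
      simp only [hMdef, Matrix.mulVec, dotProduct, Matrix.sub_apply,
        Matrix.smul_apply, Matrix.transpose_apply, smul_eq_mul, sub_mul,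
        Finset.sum_sub_distrib, mul_assoc, ← Finset.mul_sum]
      congr 1
      simp [Matrix.one_apply, ite_mul]
    rw [hexp]
    have hi : (i : ℕ) ≤ nL := by omega
    rcases eq_or_lt_of_le hi with hcase | hlt
    · -- extra node row
      have hsum : ∑ s : Fin (nL + 1), A s i * R0 s = 0 := by
        apply Finset.sum_eq_zero
        intro s _
        have : A s i = 0 := by
          rw [hA, if_neg, if_neg]
          · rintro ⟨h1, h2⟩; omega
          · rintro ⟨h1, h2⟩
            have := s.isLt; omega
        simp [this]
      rw [hsum]
      simp [hR0def, hcase]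
    · -- line row: i < nL
      have hine : ¬ ((i : ℕ) = nL) := by omega
      rcases eq_or_lt_of_le (by omega : (i : ℕ) + 1 ≤ nL) with hlast | hmid
      · -- i + 1 = nL : only possible incoming link is from extra node
        have hterm : ∀ s : Fin (nL + 1), A s i * R0 s =
            if (s : ℕ) = nL ∧ (i : ℕ) + 1 = j then R0 s else 0 := by
          intro s
          rw [hA]
          split_ifs with h1 h2 <;> first | omega | simp [h2] | simp
        simp only [hterm]
        by_cases hjeq : (i : ℕ) + 1 = j
        · have : ∀ s : Fin (nL + 1),
              (if (s : ℕ) = nL ∧ (i : ℕ) + 1 = j then R0 s else 0) =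
              (if (s : ℕ) = nL then R0 s else 0) := by
            intro s; simp [hjeq]
          rw [Finset.sum_congr rfl (fun s _ => this s),
            sum_if_coe nL (by omega) R0]
          have h1 : nL - (i : ℕ) = 1 := by omega
          have h2 : j - (i : ℕ) = 1 := by omega
          simp only [hR0def, hine, if_false, if_pos (le_of_eq hjeq), h1, h2]
          simp only [if_pos rfl, pow_one]
          field_simp
          rw [if_pos trivial]; ring
        · have hz : ∑ s : Fin (nL + 1),
              (if (s : ℕ) = nL ∧ (i : ℕ) + 1 = j then R0 s else 0) = 0 := by
            apply Finset.sum_eq_zero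
            intro s _
            simp [hjeq]
          rw [hz]
          have h1 : nL - (i : ℕ) = 1 := by omega
          have h2 : ¬ ((i : ℕ) + 1 ≤ j) := by omega
          simp only [hR0def, hine, if_false, h1, h2, pow_one]
          field_simp
          ring
      · -- i + 1 < nL
        have hterm : ∀ s : Fin (nL + 1), A s i * R0 s =
            (if (s : ℕ) = (i : ℕ) + 1 then R0 s else 0) +
            (if (s : ℕ) = nL ∧ (i : ℕ) + 1 = j then R0 s else 0) := by
          intro s
          rw [hA]
          split_ifs with h1 h2 <;> first | omega | simp | ring
        simp only [hterm, Finset.sum_add_distrib]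
        rw [sum_if_coe ((i : ℕ) + 1) (by omega) R0]
        have hnext : R0 ⟨(i : ℕ) + 1, by omega⟩ =
            (1 - c ^ (nL - ((i : ℕ) + 1))) / (1 - c) +
            (if (i : ℕ) + 2 ≤ j then c ^ (j - ((i : ℕ) + 1)) else 0) := by
          have hco : ((⟨(i : ℕ) + 1, by omega⟩ : Fin (nL + 1)) : ℕ) = (i : ℕ) + 1 := rfl
          simp only [hR0def, hco]
          rw [if_neg (by omega)]
        rw [hnext]
        have hpow : c ^ (nL - (i : ℕ)) = c * c ^ (nL - ((i : ℕ) + 1)) := by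
          rw [← pow_succ']
          congr 1
          omega
        by_cases hjeq : (i : ℕ) + 1 = j
        · have hsecond : ∑ s : Fin (nL + 1),
              (if (s : ℕ) = nL ∧ (i : ℕ) + 1 = j then R0 s else 0) = 1 := by
            have : ∀ s : Fin (nL + 1),
                (if (s : ℕ) = nL ∧ (i : ℕ) + 1 = j then R0 s else 0) =
                (if (s : ℕ) = nL then R0 s else 0) := by
              intro s; simp [hjeq]
            rw [Finset.sum_congr rfl (fun s _ => this s),
              sum_if_coe nL (by omega) R0]
            simp [hR0def]
          rw [hsecond]
          have h2 : j - (i : ℕ) = 1 := by omega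
          have h3 : ¬ ((i : ℕ) + 2 ≤ j) := by omega
          simp only [hR0def, hine, if_false, if_pos (le_of_eq hjeq), h2,
            h3, pow_one, hpow]
          field_simp
          ring
        · have hsecond : ∑ s : Fin (nL + 1),
              (if (s : ℕ) = nL ∧ (i : ℕ) + 1 = j then R0 s else 0) = 0 := by
            apply Finset.sum_eq_zero
            intro s _
            simp [hjeq]
          rw [hsecond]
          by_cases hjlt : (i : ℕ) + 1 ≤ j
          · -- i + 1 < j
            have h3 : (i : ℕ) + 2 ≤ j := by omega
            have hpowj : c ^ (j - (i : ℕ)) = c * c ^ (j - ((i : ℕ) + 1)) := by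
              rw [← pow_succ']
              congr 1
              omega
            simp only [hR0def, hine, if_false, if_pos hjlt, if_pos h3,
              hpow, hpowj]
            field_simp
            ring
          · have h3 : ¬ ((i : ℕ) + 2 ≤ j) := by omega
            simp only [hR0def, hine, if_false, if_neg hjlt, if_neg h3, hpow]
            field_simp
            ring
  have hMR : M *ᵥ R0 = fun _ => 1 := funext hrow
  have hReq : R = R0 := by
    rw [hR, ← hMR, Matrix.mulVec_mulVec, Matrix.nonsing_inv_mul M hunit,
      Matrix.one_mulVec]
  constructor
  · intro i hi
    rw [hReq]
    simp only [hR0def]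
    rw [if_neg (by omega)]
  · intro i hi
    rw [hReq]
    simp only [hR0def]
    rw [if_pos hi]
end

section
/- Complete graph linking into a line: let S consist of a simple line with n_L nodes and a complete graph with n_G ≥ 2 nodes, with node 1 of the complete graph additionally linking to node j of the line. Then the PageRank of line node i is R_i = (1-c^{n_L-i+1})/(1-c) + b_{ij} with b_{ij} = c^{j+1-i}(c + n_G - 1)/(n_G(n_G-1) - n_G(n_G-2)c - (n_G-1)c²) for j ≥ i and b_{ij} = 0 for j < i; the linking graph node has PageRank (n_G(n_G-1)+n_G c)/(n_G(n_G-1)-(n_G-1)c²-n_G(n_G-2)c) and each other graph node has PageRank ((c+n_G)(n_G-1))/(n_G(n_G-1)-(n_G-1)c²-n_G(n_G-2)c). -/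
open Matrix

private lemma sum_range_split' (f : ℕ → ℝ) (a b : ℕ) :
    ∑ i ∈ Finset.range (a + b), f i =
      (∑ i ∈ Finset.range a, f i) + ∑ i ∈ Finset.range b, f (a + i) := by
  rw [Finset.range_eq_Ico, ← Finset.sum_Ico_consecutive f (Nat.zero_le a) (Nat.le_add_right a b),
    ← Finset.range_eq_Ico, Finset.sum_Ico_eq_sum_range]
  simp

set_option maxHeartbeats 1200000 in
/-- A simple line on `nL` nodes (indices `0,…,nL-1`) together with a complete graph
on `nG ≥ 2` nodes (indices `nL,…,nL+nG-1`), where graph node `1` (index `nL`)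
additionally links to line node `j` (so it has `nG` links of weight `1/nG`):
formulas for the non-normalized PageRank of every node. -/
theorem complete_graph_links_to_line_pagerank (nL nG : ℕ) (hnL : 1 ≤ nL)
    (hnG : 2 ≤ nG) (j : ℕ) (hj1 : 1 ≤ j) (hj2 : j ≤ nL)
    (c : ℝ) (hc0 : 0 < c) (hc1 : c < 1)
    (A : Matrix (Fin (nL + nG)) (Fin (nL + nG)) ℝ)
    (hA : ∀ r s : Fin (nL + nG), A r s =
      if (r : ℕ) < nL then (if (r : ℕ) = (s : ℕ) + 1 then 1 else 0)
      else if (r : ℕ) = nL then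
        (if (s : ℕ) + 1 = j ∨ nL < (s : ℕ) then 1 / (nG : ℝ) else 0)
      else (if nL ≤ (s : ℕ) ∧ s ≠ r then 1 / ((nG : ℝ) - 1) else 0))
    (R : Fin (nL + nG) → ℝ)
    (hR : R = (1 - c • A.transpose)⁻¹ *ᵥ fun _ => 1)
    (D : ℝ)
    (hD : D = (nG : ℝ) * ((nG : ℝ) - 1) - ((nG : ℝ) - 1) * c ^ 2 -
      (nG : ℝ) * ((nG : ℝ) - 2) * c) :
    (∀ i : Fin (nL + nG), (i : ℕ) < nL →
        R i = (1 - c ^ (nL - (i : ℕ))) / (1 - c) +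
          (if (i : ℕ) + 1 ≤ j then
            c ^ (j - (i : ℕ)) * (c + (nG : ℝ) - 1) / D else 0)) ∧
    (∀ i : Fin (nL + nG), (i : ℕ) = nL →
        R i = ((nG : ℝ) * ((nG : ℝ) - 1) + (nG : ℝ) * c) / D) ∧
    (∀ i : Fin (nL + nG), nL < (i : ℕ) →
        R i = ((c + (nG : ℝ)) * ((nG : ℝ) - 1)) / D) := by
  obtain ⟨m, rfl⟩ : ∃ m, nG = m + 2 := ⟨nG - 2, by omega⟩
  have hc1' : (1 : ℝ) - c ≠ 0 := by linarith
  have hm0 : (0 : ℝ) ≤ (m : ℝ) := Nat.cast_nonneg m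
  have hNval : ((m + 2 : ℕ) : ℝ) = (m : ℝ) + 2 := by push_cast; ring
  have hN0 : ((m + 2 : ℕ) : ℝ) ≠ 0 := by rw [hNval]; nlinarith
  have hN1 : ((m + 2 : ℕ) : ℝ) - 1 ≠ 0 := by rw [hNval]; nlinarith
  have hDval : D = ((m : ℝ) + 2) * (((m : ℝ) + 2) - 1) - (((m : ℝ) + 2) - 1) * c ^ 2 -
      ((m : ℝ) + 2) * (((m : ℝ) + 2) - 2) * c := by rw [hD, hNval]
  have hDpos : 0 < D := by
    rw [hDval]
    nlinarith [mul_nonneg (mul_nonneg (by linarith : (0:ℝ) ≤ (m:ℝ) + 2) hm0)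
        (by linarith : (0:ℝ) ≤ 1 - c),
      mul_pos (by linarith : (0:ℝ) < (m:ℝ) + 1) (by nlinarith : (0:ℝ) < 1 - c ^ 2)]
  have hD0 : D ≠ 0 := ne_of_gt hDpos
  set v1 : ℝ := (((m + 2 : ℕ) : ℝ) * (((m + 2 : ℕ) : ℝ) - 1) + ((m + 2 : ℕ) : ℝ) * c) / D
    with hv1
  set vG : ℝ := ((c + ((m + 2 : ℕ) : ℝ)) * (((m + 2 : ℕ) : ℝ) - 1)) / D with hvG
  set w : ℕ → ℝ := fun s =>
    if s < nL then (1 - c ^ (nL - s)) / (1 - c) +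
      (if s + 1 ≤ j then c ^ (j - s) * (c + ((m + 2 : ℕ) : ℝ) - 1) / D else 0)
    else if s = nL then v1 else vG with hwdef
  set aN : ℕ → ℕ → ℝ := fun p q =>
    if p < nL then (if p = q + 1 then 1 else 0)
    else if p = nL then (if q + 1 = j ∨ nL < q then 1 / ((m + 2 : ℕ) : ℝ) else 0)
    else if nL ≤ q ∧ q ≠ p then 1 / (((m + 2 : ℕ) : ℝ) - 1) else 0 with haN
  have hA' : ∀ p q : Fin (nL + (m + 2)), A p q = aN p q := by
    intro p q
    rw [hA, haN]
    simp only [Ne, Fin.ext_iff]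
  have haNnn : ∀ p q : ℕ, 0 ≤ aN p q := by
    intro p q
    have h1 : (0:ℝ) ≤ 1 / ((m + 2 : ℕ) : ℝ) := by rw [hNval]; positivity
    have h2 : (0:ℝ) ≤ 1 / (((m + 2 : ℕ) : ℝ) - 1) := by
      rw [hNval]
      have : ((m:ℝ) + 2) - 1 = (m:ℝ) + 1 := by ring
      rw [this]; positivity
    rw [haN]; dsimp only
    split_ifs <;> first | exact le_refl 0 | exact zero_le_one | exact h1 | exact h2
  -- values of w on graph nodes
  have hwnL : w nL = v1 := by rw [hwdef]; simp
  have hwG : ∀ t : ℕ, w (nL + (t + 1)) = vG := by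
    intro t; rw [hwdef]; dsimp only
    rw [if_neg (by omega), if_neg (by omega)]
  -- row sums of aN are at most 1
  have hrow : ∀ p : ℕ, p < nL + (m + 2) →
      ∑ s ∈ Finset.range (nL + (m + 2)), aN p s ≤ 1 := by
    intro p hp
    rcases lt_trichotomy p nL with h | h | h
    · by_cases h1 : 1 ≤ p
      · have e : ∀ s ∈ Finset.range (nL + (m + 2)), aN p s = if s = p - 1 then 1 else 0 := by
          intro s _
          rw [haN]; dsimp only; rw [if_pos h]
          exact if_congr (by omega) rfl rfl
        rw [Finset.sum_congr rfl e, Finset.sum_ite_eq']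
        split <;> norm_num
      · have e : ∀ s ∈ Finset.range (nL + (m + 2)), aN p s = 0 := by
          intro s _
          rw [haN]; dsimp only; rw [if_pos h, if_neg (by omega)]
        rw [Finset.sum_congr rfl e]; simp
    · rw [sum_range_split']
      have e1 : ∑ s ∈ Finset.range nL, aN p s = 1 / ((m + 2 : ℕ) : ℝ) := by
        have e : ∀ s ∈ Finset.range nL, aN p s =
            if s = j - 1 then 1 / ((m + 2 : ℕ) : ℝ) else 0 := by
          intro s hs
          have hs' := Finset.mem_range.mp hs
          rw [haN]; dsimp only; rw [if_neg (by omega), if_pos h]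
          exact if_congr (by omega) rfl rfl
        rw [Finset.sum_congr rfl e, Finset.sum_ite_eq',
          if_pos (Finset.mem_range.mpr (by omega))]
      have e2 : ∑ t ∈ Finset.range (m + 2), aN p (nL + t) =
          (m + 1 : ℕ) * (1 / ((m + 2 : ℕ) : ℝ)) := by
        rw [Finset.sum_range_succ']
        have e : ∀ t ∈ Finset.range (m + 1), aN p (nL + (t + 1)) = 1 / ((m + 2 : ℕ) : ℝ) := by
          intro t _
          rw [haN]; dsimp only
          rw [if_neg (by omega), if_pos h, if_pos (Or.inr (by omega))]
        rw [Finset.sum_congr rfl e, Finset.sum_const, haN]; dsimp only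
        rw [if_neg (by omega), if_pos h, if_neg (by omega)]
        simp [nsmul_eq_mul]
      rw [e1, e2, hNval]
      push_cast
      have hm2 : ((m:ℝ) + 2) ≠ 0 := by positivity
      have : 1 / ((m:ℝ) + 2) + ((m:ℝ) + 1) * (1 / ((m:ℝ) + 2)) = 1 := by
        field_simp
        ring
      rw [this]
    · rw [sum_range_split']
      have e1 : ∑ s ∈ Finset.range nL, aN p s = 0 := by
        apply Finset.sum_eq_zero
        intro s hs
        have hs' := Finset.mem_range.mp hs
        rw [haN]; dsimp only
        rw [if_neg (by omega), if_neg (by omega), if_neg (by omega)]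
      have e2 : ∑ t ∈ Finset.range (m + 2), aN p (nL + t) = 1 := by
        rw [Finset.sum_range_succ']
        have e : ∀ t ∈ Finset.range (m + 1), aN p (nL + (t + 1)) =
            1 / (((m + 2 : ℕ) : ℝ) - 1) -
              (if t = p - nL - 1 then 1 / (((m + 2 : ℕ) : ℝ) - 1) else 0) := by
          intro t _
          rw [haN]; dsimp only
          rw [if_neg (by omega), if_neg (by omega)]
          by_cases ht : t = p - nL - 1
          · rw [if_pos ht, if_neg (by omega)]; ring
          · rw [if_neg ht, if_pos ⟨by omega, by omega⟩]; ring
        rw [Finset.sum_congr rfl e, Finset.sum_sub_distrib, Finset.sum_const,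
          Finset.sum_ite_eq', if_pos (Finset.mem_range.mpr (by omega)), haN]
        dsimp only
        rw [if_neg (by omega), if_neg (by omega), if_pos ⟨le_refl nL, by omega⟩]
        rw [hNval]
        have h21 : ((m:ℝ) + 2) - 1 = (m:ℝ) + 1 := by ring
        rw [h21]
        have hm1 : ((m:ℝ) + 1) ≠ 0 := by positivity
        simp only [nsmul_eq_mul]
        push_cast
        field_simp
        try ring
        simp
      rw [e1, e2]; norm_num
  -- the matrix
  set M : Matrix (Fin (nL + (m + 2))) (Fin (nL + (m + 2))) ℝ := 1 - c • A.transpose with hM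
  have haNdiag : ∀ k : Fin (nL + (m + 2)), aN k k = 0 := by
    intro k
    rw [haN]; dsimp only
    have hk := k.isLt
    split_ifs with h1 h2 h3 h4 h5 <;> first | rfl | omega
  have hdet : M.det ≠ 0 := by
    apply det_ne_zero_of_sum_col_lt_diag
    intro k
    have hMkk : M k k = 1 := by
      rw [hM]
      simp only [Matrix.sub_apply, Matrix.one_apply_eq, Matrix.smul_apply,
        Matrix.transpose_apply, hA' k k, haNdiag k, smul_eq_mul, mul_zero, sub_zero]
    rw [hMkk]
    have step1 : ∑ i ∈ Finset.univ.erase k, ‖M i k‖ =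
        ∑ i ∈ Finset.univ.erase k, c * aN k i := by
      apply Finset.sum_congr rfl
      intro i hi
      have hik : i ≠ k := (Finset.mem_erase.mp hi).1
      rw [hM]
      simp only [Matrix.sub_apply, Matrix.one_apply, Matrix.smul_apply,
        Matrix.transpose_apply, hA' k i, smul_eq_mul, if_neg hik, zero_sub, norm_neg]
      rw [Real.norm_eq_abs, abs_of_nonneg (mul_nonneg hc0.le (haNnn _ _))]
    rw [step1]
    have step2 : ∑ i ∈ Finset.univ.erase k, c * aN k i ≤
        ∑ i : Fin (nL + (m + 2)), c * aN k i := by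
      apply Finset.sum_le_sum_of_subset_of_nonneg (Finset.subset_univ _)
      intro i _ _
      exact mul_nonneg hc0.le (haNnn _ _)
    have step3 : ∑ i : Fin (nL + (m + 2)), c * aN k i ≤ c := by
      rw [← Finset.mul_sum]
      have : ∑ i : Fin (nL + (m + 2)), aN (k : ℕ) (i : ℕ) =
          ∑ s ∈ Finset.range (nL + (m + 2)), aN k s :=
        Fin.sum_univ_eq_sum_range (fun s => aN k s) _
      rw [this]
      calc c * ∑ s ∈ Finset.range (nL + (m + 2)), aN k s ≤ c * 1 := by
            exact mul_le_mul_of_nonneg_left (hrow k k.isLt) hc0.le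
        _ = c := mul_one c
    have : ‖(1:ℝ)‖ = 1 := norm_one
    rw [this]
    linarith
  -- scalar identities
  have id1 : v1 - c * vG = 1 := by
    rw [hv1, hvG, hNval]
    field_simp
    rw [hDval]; ring
  have id2 : v1 - c * ((m + 1 : ℕ) * (1 / (((m + 2 : ℕ) : ℝ) - 1) * vG)) = 1 := by
    rw [hv1, hvG, hNval]
    have h21 : ((m:ℝ) + 2) - 1 = (m:ℝ) + 1 := by ring
    push_cast
    rw [h21]
    have hm1 : (m:ℝ) + 1 ≠ 0 := by positivity
    field_simp
    rw [hDval]; ring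
  have id3 : vG - c * (1 / ((m + 2 : ℕ) : ℝ) * v1 +
      (m : ℕ) * (1 / (((m + 2 : ℕ) : ℝ) - 1) * vG)) = 1 := by
    rw [hv1, hvG, hNval]
    have h21 : ((m:ℝ) + 2) - 1 = (m:ℝ) + 1 := by ring
    rw [h21]
    have hm1 : (m:ℝ) + 1 ≠ 0 := by positivity
    have hm2 : (m:ℝ) + 2 ≠ 0 := by positivity
    field_simp
    rw [hDval]; ring
  have id4 : v1 / ((m + 2 : ℕ) : ℝ) = (c + ((m + 2 : ℕ) : ℝ) - 1) / D := by
    rw [hv1, hNval]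
    have hm2 : (m:ℝ) + 2 ≠ 0 := by positivity
    field_simp
    ring
  -- the key fixed point equation
  have key : ∀ p : ℕ, p < nL + (m + 2) →
      w p - c * ∑ s ∈ Finset.range (nL + (m + 2)), aN s p * w s = 1 := by
    intro p hp
    rcases lt_trichotomy p nL with h | h | h
    · -- line node
      rw [sum_range_split']
      have e1 : ∑ s ∈ Finset.range nL, aN s p * w s =
          if p + 1 < nL then w (p + 1) else 0 := by
        have e : ∀ s ∈ Finset.range nL, aN s p * w s = if s = p + 1 then w s else 0 := by
          intro s hs
          rw [haN]; dsimp only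
          rw [if_pos (Finset.mem_range.mp hs)]
          by_cases h' : s = p + 1 <;> simp [h']
        rw [Finset.sum_congr rfl e, Finset.sum_ite_eq']
        simp [Finset.mem_range]
      have e2 : ∑ t ∈ Finset.range (m + 2), aN (nL + t) p * w (nL + t) =
          if p + 1 = j then 1 / ((m + 2 : ℕ) : ℝ) * v1 else 0 := by
        rw [Finset.sum_range_succ']
        have e : ∀ t ∈ Finset.range (m + 1), aN (nL + (t + 1)) p * w (nL + (t + 1)) = 0 := by
          intro t _
          rw [haN]; dsimp only
          rw [if_neg (by omega), if_neg (by omega), if_neg (by omega)]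
          ring
        rw [Finset.sum_congr rfl e]
        rw [Finset.sum_eq_zero (fun t _ => rfl), zero_add]
        rw [haN]; dsimp only
        rw [if_neg (by omega), if_pos (show nL + 0 = nL from rfl)]
        rw [if_congr (show (p + 1 = j ∨ nL < p) ↔ p + 1 = j by omega) rfl rfl,
          show nL + 0 = nL from rfl, hwnL]
        by_cases h' : p + 1 = j <;> simp [h']
      rw [e1, e2]
      have hwp : w p = (1 - c ^ (nL - p)) / (1 - c) +
          (if p + 1 ≤ j then c ^ (j - p) * (c + ((m + 2 : ℕ) : ℝ) - 1) / D else 0) := by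
        rw [hwdef]; dsimp only; rw [if_pos h]
      rw [hwp]
      have hpow1 : nL - p = (nL - (p + 1)) + 1 := by omega
      by_cases h1 : p + 1 < nL
      · have hwp1 : w (p + 1) = (1 - c ^ (nL - (p + 1))) / (1 - c) +
            (if p + 1 + 1 ≤ j then c ^ (j - (p + 1)) * (c + ((m + 2 : ℕ) : ℝ) - 1) / D
              else 0) := by
          rw [hwdef]; dsimp only; rw [if_pos h1]
        rw [if_pos h1, hwp1]
        rcases lt_trichotomy (p + 1) j with h2 | h2 | h2
        · rw [if_pos (by omega), if_pos (by omega), if_neg (by omega)]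
          have hj : j - p = (j - (p + 1)) + 1 := by omega
          rw [hpow1, hj, pow_succ, pow_succ]
          field_simp
          ring
        · rw [if_pos (by omega), if_neg (by omega), if_pos h2]
          have hj : j - p = 1 := by omega
          rw [hpow1, hj, pow_one, pow_succ]
          have : 1 / ((m + 2 : ℕ) : ℝ) * v1 = (c + ((m + 2 : ℕ) : ℝ) - 1) / D := by
            rw [← id4]; ring
          rw [this]
          field_simp
          ring
        · rw [if_neg (by omega), if_neg (by omega), if_neg (by omega)]
          rw [hpow1, pow_succ]
          field_simp
          ring
      · have hEq : p + 1 = nL := by omega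
        rw [if_neg h1]
        have hnlp : nL - p = 1 := by omega
        by_cases h2 : p + 1 = j
        · rw [if_pos (by omega), if_pos h2, hnlp, pow_one]
          have hj : j - p = 1 := by omega
          rw [hj, pow_one]
          have : 1 / ((m + 2 : ℕ) : ℝ) * v1 = (c + ((m + 2 : ℕ) : ℝ) - 1) / D := by
            rw [← id4]; ring
          rw [this]
          field_simp
          try ring
        · rw [if_neg (by omega), if_neg h2, hnlp, pow_one]
          field_simp
          ring
    · -- linking graph node
      rw [sum_range_split']
      have e1 : ∑ s ∈ Finset.range nL, aN s p * w s = 0 := by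
        apply Finset.sum_eq_zero
        intro s hs
        have hs' := Finset.mem_range.mp hs
        rw [haN]; dsimp only
        rw [if_pos hs', if_neg (by omega)]
        ring
      have e2 : ∑ t ∈ Finset.range (m + 2), aN (nL + t) p * w (nL + t) =
          (m + 1 : ℕ) * (1 / (((m + 2 : ℕ) : ℝ) - 1) * vG) := by
        rw [Finset.sum_range_succ']
        have e : ∀ t ∈ Finset.range (m + 1), aN (nL + (t + 1)) p * w (nL + (t + 1)) =
            1 / (((m + 2 : ℕ) : ℝ) - 1) * vG := by
          intro t _
          rw [haN, hwG]; dsimp only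
          rw [if_neg (by omega), if_neg (by omega), if_pos ⟨by omega, by omega⟩]
        rw [Finset.sum_congr rfl e, Finset.sum_const, haN]; dsimp only
        rw [if_neg (by omega), if_pos (by omega), if_neg (by omega)]
        simp [nsmul_eq_mul]
      rw [e1, e2, zero_add]
      have hwp : w p = v1 := by rw [hwdef]; dsimp only; rw [if_neg (by omega), if_pos h]
      rw [hwp]
      exact id2
    · -- other graph nodes
      rw [sum_range_split']
      have e1 : ∑ s ∈ Finset.range nL, aN s p * w s = 0 := by
        apply Finset.sum_eq_zero
        intro s hs
        have hs' := Finset.mem_range.mp hs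
        rw [haN]; dsimp only
        rw [if_pos hs', if_neg (by omega)]
        ring
      have e2 : ∑ t ∈ Finset.range (m + 2), aN (nL + t) p * w (nL + t) =
          1 / ((m + 2 : ℕ) : ℝ) * v1 +
            (m : ℕ) * (1 / (((m + 2 : ℕ) : ℝ) - 1) * vG) := by
        rw [Finset.sum_range_succ']
        have e : ∀ t ∈ Finset.range (m + 1), aN (nL + (t + 1)) p * w (nL + (t + 1)) =
            1 / (((m + 2 : ℕ) : ℝ) - 1) * vG -
              (if t = p - nL - 1 then 1 / (((m + 2 : ℕ) : ℝ) - 1) * vG else 0) := by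
          intro t _
          rw [haN, hwG]; dsimp only
          rw [if_neg (by omega), if_neg (by omega)]
          by_cases ht : t = p - nL - 1
          · rw [if_pos ht, if_neg (by omega)]; ring
          · rw [if_neg ht, if_pos ⟨by omega, by omega⟩]; ring
        rw [Finset.sum_congr rfl e, Finset.sum_sub_distrib, Finset.sum_const,
          Finset.sum_ite_eq', if_pos (Finset.mem_range.mpr (by omega)), haN]
        dsimp only
        rw [if_neg (by omega), if_pos (show nL + 0 = nL from rfl),
          if_pos (show p + 1 = j ∨ nL < p from Or.inr (by omega)),
          show nL + 0 = nL from rfl, hwnL]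
        simp only [nsmul_eq_mul, Finset.card_range]
        push_cast
        ring
      rw [e1, e2, zero_add]
      have hwp : w p = vG := by
        rw [hwdef]; dsimp only; rw [if_neg (by omega), if_neg (by omega)]
      rw [hwp]
      exact id3
  -- M *ᵥ w = 1
  have hMv : M *ᵥ (fun i : Fin (nL + (m + 2)) => w i) = fun _ => 1 := by
    funext r
    have expand : (M *ᵥ fun i : Fin (nL + (m + 2)) => w i) r =
        w r - c * ∑ s ∈ Finset.range (nL + (m + 2)), aN s r * w s := by
      rw [hM]
      simp only [Matrix.mulVec, dotProduct, Matrix.sub_apply, Matrix.one_apply,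
        Matrix.smul_apply, Matrix.transpose_apply, hA', smul_eq_mul, sub_mul, ite_mul,
        one_mul, zero_mul]
      rw [Finset.sum_sub_distrib, Finset.sum_ite_eq, if_pos (Finset.mem_univ r)]
      congr 1
      have : ∑ s : Fin (nL + (m + 2)), c * aN s r * w s =
          c * ∑ s : Fin (nL + (m + 2)), aN s r * w s := by
        rw [Finset.mul_sum]
        apply Finset.sum_congr rfl
        intro s _
        ring
      rw [this]
      congr 1
      exact Fin.sum_univ_eq_sum_range (fun s => aN s r * w s) _
    rw [expand, key r r.isLt]
  -- conclude R = w
  have hRw : R = fun i : Fin (nL + (m + 2)) => w i := by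
    rw [hR, ← hMv, Matrix.mulVec_mulVec,
      Matrix.nonsing_inv_mul M (isUnit_iff_ne_zero.mpr hdet), Matrix.one_mulVec]
  refine ⟨?_, ?_, ?_⟩
  · intro i hi
    rw [hRw]
    show w i = _
    rw [hwdef]; dsimp only; rw [if_pos hi]
  · intro i hi
    rw [hRw]
    show w i = _
    rw [hwdef]; dsimp only; rw [if_neg (by omega), if_pos hi, hv1]
  · intro i hi
    rw [hRw]
    show w i = _
    rw [hwdef]; dsimp only; rw [if_neg (by omega), if_neg (by omega), hvG]
end

section
/- Line linking into a complete graph: with a simple line of n_L nodes where node j additionally links to node g of a complete graph with n_G ≥ 2 nodes (node j thus has 2 outgoing links of weight 1/2 each), the PageRanks are: R_i = (1 - c^{n_L+1-i})/(1-c) for line nodes i ≥ j; R_i = (1-c^{j-i})/(1-c) + (c^{j-i}/2)(1-c^{n_L-j+1})/(1-c) for line nodes i < j; R_g = (c(1-c^{n_L+1-j})/(2(1-c)))·((n_G-1)-c(n_G-2))/((n_G-1)-c(n_G-2)-c²) + 1/(1-c) for the targeted graph node; and R_i = (c²(1-c^{n_L+1-j})/(2(1-c)))·1/((n_G-1)-c(n_G-2)-c²)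 + 1/(1-c) for each other graph node. -/
set_option maxHeartbeats 2000000
open Matrix

-- auxiliary candidate PageRank vector
noncomputable def LineCG.R0 (nL nG j g : ℕ) (c : ℝ) : Fin (nL + nG) → ℝ := fun i =>
  if (i : ℕ) < nL then
    if j ≤ (i : ℕ) + 1 then (1 - c ^ (nL - (i : ℕ))) / (1 - c)
    else (1 - c ^ (j - 1 - (i : ℕ))) / (1 - c) +
      (c ^ (j - 1 - (i : ℕ)) / 2) * (1 - c ^ (nL - j + 1)) / (1 - c)
  else if (i : ℕ) = nL + g - 1 then
    (c * (1 - c ^ (nL + 1 - j)) / (2 * (1 - c))) *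
        ((((nG : ℝ) - 1) - c * ((nG : ℝ) - 2)) /
          ((((nG : ℝ) - 1) - c * ((nG : ℝ) - 2)) - c ^ 2)) + 1 / (1 - c)
  else (c ^ 2 * (1 - c ^ (nL + 1 - j)) / (2 * (1 - c))) *
      (1 / ((((nG : ℝ) - 1) - c * ((nG : ℝ) - 2)) - c ^ 2)) + 1 / (1 - c)

lemma LineCG.key (nL nG : ℕ) (hnG : 2 ≤ nG)
    (j : ℕ) (hj1 : 2 ≤ j) (hj2 : j ≤ nL)
    (g : ℕ) (hg1 : 1 ≤ g) (hg2 : g ≤ nG)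
    (c : ℝ) (hc0 : 0 < c) (hc1 : c < 1)
    (A : Matrix (Fin (nL + nG)) (Fin (nL + nG)) ℝ)
    (hA : ∀ r s : Fin (nL + nG), A r s =
      if (r : ℕ) < nL then
        (if (r : ℕ) + 1 = j then
          (if (r : ℕ) = (s : ℕ) + 1 ∨ (s : ℕ) = nL + g - 1 then 1 / 2 else 0)
        else (if (r : ℕ) = (s : ℕ) + 1 ∧ (s : ℕ) < nL then 1 else 0))
      else (if nL ≤ (s : ℕ) ∧ s ≠ r then 1 / ((nG : ℝ) - 1) else 0)) :
    ∀ s : Fin (nL + nG), LineCG.R0 nL nG j g c s -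
      c * (∑ r, A r s * LineCG.R0 nL nG j g c r) = 1 := by
  intro s
  set R0 := LineCG.R0 nL nG j g c with hR0
  have hc : (1 : ℝ) - c ≠ 0 := by nlinarith
  have hm2 : (2 : ℝ) ≤ (nG : ℝ) := by exact_mod_cast hnG
  have hm1 : ((nG : ℝ) - 1) ≠ 0 := by nlinarith
  have hD : (((nG : ℝ) - 1) - c * ((nG : ℝ) - 2)) - c ^ 2 ≠ 0 := by nlinarith
  -- zero entries into line nodes
  have hline : ∀ s r : Fin (nL + nG), (s : ℕ) < nL →
      ¬((r : ℕ) < nL ∧ (r : ℕ) = (s : ℕ) + 1) → A r s = 0 := by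
    intro s r hs hr
    rw [hA]
    split_ifs with h1 h2 h3 h4 h5 <;> try rfl
    · exfalso; omega
    · exfalso; omega
    · exfalso; exact absurd h5.1 (by omega)
  rcases lt_or_ge (s : ℕ) nL with hs | hs
  · -- line node
    rcases eq_or_lt_of_le (Nat.succ_le_of_lt hs) with hsl | hsl
    · -- last line node : no incoming links
      have hSum : (∑ r, A r s * R0 r) = 0 := by
        apply Finset.sum_eq_zero
        intro r _
        rw [hline s r hs (by omega), zero_mul]
      rw [hSum, mul_zero, sub_zero]
      have hv : R0 s = (1 - c ^ (nL - (s : ℕ))) / (1 - c) := by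
        rw [hR0]; unfold LineCG.R0
        rw [if_pos hs, if_pos (by omega)]
      rw [hv, show nL - (s : ℕ) = 1 by omega]
      field_simp
    · -- s + 1 < nL : one incoming link from r = s+1
      set r1 : Fin (nL + nG) := ⟨(s : ℕ) + 1, by omega⟩ with hr1
      have hSum : (∑ r, A r s * R0 r) = A r1 s * R0 r1 := by
        apply Finset.sum_eq_single_of_mem r1 (Finset.mem_univ _)
        intro r _ hne
        rw [hline s r hs (fun h => hne (Fin.ext h.2)), zero_mul]
      have hAr1 : A r1 s = if (s : ℕ) + 2 = j then 1 / 2 else 1 := by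
        rw [hA]
        have : (r1 : ℕ) = (s : ℕ) + 1 := rfl
        rw [this, if_pos (by omega)]
        by_cases hj : (s : ℕ) + 2 = j
        · rw [if_pos (by omega), if_pos (Or.inl rfl), if_pos hj]
        · rw [if_neg (by omega), if_pos ⟨rfl, hs⟩, if_neg hj]
      rw [hSum, hAr1]
      by_cases hcase : j ≤ (s : ℕ) + 1
      · -- both first branch
        have hv : R0 s = (1 - c ^ (nL - (s : ℕ))) / (1 - c) := by
          rw [hR0]; unfold LineCG.R0; rw [if_pos hs, if_pos hcase]
        have hv1 : R0 r1 = (1 - c ^ (nL - ((s : ℕ) + 1))) / (1 - c) := by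
          rw [hR0]; unfold LineCG.R0
          rw [show ((r1 : Fin (nL+nG)) : ℕ) = (s : ℕ) + 1 from rfl,
            if_pos (by omega), if_pos (by omega)]
        rw [hv, hv1, if_neg (by omega), show nL - (s : ℕ) = (nL - ((s:ℕ)+1)) + 1 by omega]
        generalize nL - ((s : ℕ) + 1) = k
        field_simp
        ring
      · rcases eq_or_lt_of_le (by omega : (s : ℕ) + 2 ≤ j) with hj | hj
        · -- s + 2 = j : half link to next line node
          have hv : R0 s = (1 - c ^ 1) / (1 - c) +
              (c ^ 1 / 2) * (1 - c ^ (nL - j + 1)) / (1 - c) := by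
            rw [hR0]; unfold LineCG.R0
            rw [if_pos hs, if_neg hcase, show j - 1 - (s : ℕ) = 1 by omega]
          have hv1 : R0 r1 = (1 - c ^ (nL - j + 1)) / (1 - c) := by
            rw [hR0]; unfold LineCG.R0
            rw [show ((r1 : Fin (nL+nG)) : ℕ) = (s : ℕ) + 1 from rfl,
              if_pos (by omega), if_pos (by omega), show nL - ((s:ℕ)+1) = nL - j + 1 by omega]
          rw [hv, hv1, if_pos hj]
          field_simp
          ring
        · -- s + 2 < j : both second branch
          have hv : R0 s = (1 - c ^ ((j - 1 - ((s : ℕ) + 1)) + 1)) / (1 - c) +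
              (c ^ ((j - 1 - ((s : ℕ) + 1)) + 1) / 2) * (1 - c ^ (nL - j + 1)) / (1 - c) := by
            rw [hR0]; unfold LineCG.R0
            rw [if_pos hs, if_neg hcase, show j - 1 - (s : ℕ) = (j - 1 - ((s:ℕ)+1)) + 1 by omega]
          have hv1 : R0 r1 = (1 - c ^ (j - 1 - ((s : ℕ) + 1))) / (1 - c) +
              (c ^ (j - 1 - ((s : ℕ) + 1)) / 2) * (1 - c ^ (nL - j + 1)) / (1 - c) := by
            rw [hR0]; unfold LineCG.R0
            rw [show ((r1 : Fin (nL+nG)) : ℕ) = (s : ℕ) + 1 from rfl,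
              if_pos (by omega), if_neg (by omega)]
          rw [hv, hv1, if_neg (by omega)]
          generalize j - 1 - ((s : ℕ) + 1) = k
          generalize (1 : ℝ) - c ^ (nL - j + 1) = Q
          field_simp
          ring
  · -- graph node
    set Rg : ℝ := (c * (1 - c ^ (nL + 1 - j)) / (2 * (1 - c))) *
        ((((nG : ℝ) - 1) - c * ((nG : ℝ) - 2)) /
          ((((nG : ℝ) - 1) - c * ((nG : ℝ) - 2)) - c ^ 2)) + 1 / (1 - c) with hRgdef
    set Ro : ℝ := (c ^ 2 * (1 - c ^ (nL + 1 - j)) / (2 * (1 - c))) *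
        (1 / ((((nG : ℝ) - 1) - c * ((nG : ℝ) - 2)) - c ^ 2)) + 1 / (1 - c) with hRodef
    have hslt := s.isLt
    set t : Fin nG := ⟨(s : ℕ) - nL, by omega⟩ with ht
    set gi : Fin nG := ⟨g - 1, by omega⟩ with hgi
    have htv : (t : ℕ) = (s : ℕ) - nL := rfl
    have hgiv : (gi : ℕ) = g - 1 := rfl
    have hR0g : ∀ b : Fin nG, R0 (Fin.natAdd nL b) = if b = gi then Rg else Ro := by
      intro b
      have hb : ((Fin.natAdd nL b : Fin (nL + nG)) : ℕ) = nL + (b : ℕ) := rfl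
      rw [hR0]; unfold LineCG.R0
      rw [hb, if_neg (by omega)]
      by_cases hbg : (b : ℕ) = g - 1
      · rw [if_pos (by omega), if_pos (Fin.ext (by rw [hgiv]; exact hbg))]
      · rw [if_neg (by omega), if_neg (fun he => hbg (by rw [← hgiv, he]))]
    have hAg : ∀ b : Fin nG, A (Fin.natAdd nL b) s =
        if b = t then 0 else 1 / ((nG : ℝ) - 1) := by
      intro b
      have hb : ((Fin.natAdd nL b : Fin (nL + nG)) : ℕ) = nL + (b : ℕ) := rfl
      rw [hA, if_neg (by rw [hb]; omega)]
      by_cases hbt : b = t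
      · rw [if_neg, if_pos hbt]
        rintro ⟨-, hne⟩
        apply hne
        apply Fin.ext
        rw [hb]
        have : (b : ℕ) = (s : ℕ) - nL := by rw [hbt]
        omega
      · rw [if_pos, if_neg hbt]
        refine ⟨hs, fun he => hbt (Fin.ext ?_)⟩
        rw [htv]
        have : (s : ℕ) = nL + (b : ℕ) := by rw [he]; rfl
        omega
    rw [Fin.sum_univ_add]
    have hGsum : (∑ b : Fin nG, A (Fin.natAdd nL b) s * R0 (Fin.natAdd nL b)) =
        (1 / ((nG : ℝ) - 1)) * (((nG : ℝ) * Ro + (Rg - Ro)) -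
          (if t = gi then Rg else Ro)) := by
      have key : ∀ b : Fin nG, A (Fin.natAdd nL b) s * R0 (Fin.natAdd nL b) =
          (1 / ((nG : ℝ) - 1)) * ((Ro + (if b = gi then Rg - Ro else 0)) -
            (if b = t then (if t = gi then Rg else Ro) else 0)) := by
        intro b
        rw [hAg b, hR0g b]
        rcases eq_or_ne b t with h1 | h1 <;> rcases eq_or_ne b gi with h2 | h2
        · have h3 : t = gi := h1.symm.trans h2
          simp only [if_pos h1, if_pos h2, if_pos h3]
          ring
        · have h3 : t ≠ gi := fun h => h2 (h1.trans h)
          simp only [if_pos h1, if_neg h2, if_neg h3]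
          ring
        · simp only [if_neg h1, if_pos h2]
          ring
        · simp only [if_neg h1, if_neg h2]
          ring
      simp_rw [key]
      rw [← Finset.mul_sum, Finset.sum_sub_distrib, Finset.sum_add_distrib,
        Finset.sum_const, Finset.sum_ite_eq' Finset.univ gi, Finset.sum_ite_eq' Finset.univ t,
        if_pos (Finset.mem_univ _), if_pos (Finset.mem_univ _), Finset.card_univ,
        Fintype.card_fin, nsmul_eq_mul]
    rw [hGsum]
    by_cases hsg : (s : ℕ) = nL + g - 1
    · -- the targeted graph node
      have htgi : t = gi := Fin.ext (by rw [htv, hgiv]; omega)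
      have hLsum : (∑ a : Fin nL, A (Fin.castAdd nG a) s * R0 (Fin.castAdd nG a)) =
          (1 / 2) * ((1 - c ^ (nL + 1 - j)) / (1 - c)) := by
        have hj1' : j - 1 < nL := by omega
        rw [Finset.sum_eq_single_of_mem (⟨j - 1, hj1'⟩ : Fin nL) (Finset.mem_univ _)]
        · have hca : ((Fin.castAdd nG (⟨j - 1, hj1'⟩ : Fin nL) : Fin (nL + nG)) : ℕ) = j - 1 := rfl
          have hAval : A (Fin.castAdd nG (⟨j - 1, hj1'⟩ : Fin nL)) s = 1 / 2 := by
            rw [hA, hca, if_pos (by omega), if_pos (by omega), if_pos (Or.inr hsg)]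
          have hRval : R0 (Fin.castAdd nG (⟨j - 1, hj1'⟩ : Fin nL)) =
              (1 - c ^ (nL + 1 - j)) / (1 - c) := by
            rw [hR0]; unfold LineCG.R0
            rw [hca, if_pos (by omega), if_pos (by omega),
              show nL - (j - 1) = nL + 1 - j by omega]
          rw [hAval, hRval]
        · intro a _ hne
          have hca : ((Fin.castAdd nG a : Fin (nL + nG)) : ℕ) = (a : ℕ) := rfl
          have hAval : A (Fin.castAdd nG a) s = 0 := by
            rw [hA, hca, if_pos (by omega)]
            have hav : (a : ℕ) ≠ j - 1 := fun h => hne (Fin.ext h)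
            rw [if_neg (by omega), if_neg (by omega)]
          rw [hAval, zero_mul]
      have hRs : R0 s = Rg := by
        rw [hR0]; unfold LineCG.R0
        rw [if_neg (by omega), if_pos hsg]
      rw [hRs, hLsum, if_pos htgi, hRgdef, hRodef]
      field_simp
      ring
    · -- other graph nodes
      have htgi : t ≠ gi := by
        intro h
        have : (t : ℕ) = (gi : ℕ) := by rw [h]
        rw [htv, hgiv] at this
        omega
      have hLsum : (∑ a : Fin nL, A (Fin.castAdd nG a) s * R0 (Fin.castAdd nG a)) = 0 := by
        apply Finset.sum_eq_zero
        intro a _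
        have hca : ((Fin.castAdd nG a : Fin (nL + nG)) : ℕ) = (a : ℕ) := rfl
        have hAval : A (Fin.castAdd nG a) s = 0 := by
          have ha := a.isLt
          rw [hA, hca, if_pos (by omega)]
          split_ifs with h1 h2 h3
          · exfalso; rcases h2 with h2 | h2 <;> omega
          · rfl
          · exfalso; omega
          · rfl
        rw [hAval, zero_mul]
      have hRs : R0 s = Ro := by
        rw [hR0]; unfold LineCG.R0
        rw [if_neg (by omega), if_neg hsg]
      rw [hRs, hLsum, if_neg htgi, hRgdef, hRodef]
      field_simp
      ring


/-- A simple line on `nL` nodes (indices `0,…,nL-1`) where line node `j` additionally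
links (with weight `1/2` each) to node `j-1` and to node `g` of a complete graph on
`nG ≥ 2` nodes (graph node `g` has index `nL+g-1`): formulas for the non-normalized
PageRank of every node. -/
theorem line_links_to_complete_graph_pagerank (nL nG : ℕ) (hnG : 2 ≤ nG)
    (j : ℕ) (hj1 : 2 ≤ j) (hj2 : j ≤ nL)
    (g : ℕ) (hg1 : 1 ≤ g) (hg2 : g ≤ nG)
    (c : ℝ) (hc0 : 0 < c) (hc1 : c < 1)
    (A : Matrix (Fin (nL + nG)) (Fin (nL + nG)) ℝ)
    (hA : ∀ r s : Fin (nL + nG), A r s =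
      if (r : ℕ) < nL then
        (if (r : ℕ) + 1 = j then
          (if (r : ℕ) = (s : ℕ) + 1 ∨ (s : ℕ) = nL + g - 1 then 1 / 2 else 0)
        else (if (r : ℕ) = (s : ℕ) + 1 ∧ (s : ℕ) < nL then 1 else 0))
      else (if nL ≤ (s : ℕ) ∧ s ≠ r then 1 / ((nG : ℝ) - 1) else 0))
    (R : Fin (nL + nG) → ℝ)
    (hR : R = (1 - c • A.transpose)⁻¹ *ᵥ fun _ => 1) :
    (∀ i : Fin (nL + nG), (i : ℕ) < nL → j ≤ (i : ℕ) + 1 →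
        R i = (1 - c ^ (nL - (i : ℕ))) / (1 - c)) ∧
    (∀ i : Fin (nL + nG), (i : ℕ) + 1 < j →
        R i = (1 - c ^ (j - 1 - (i : ℕ))) / (1 - c) +
          (c ^ (j - 1 - (i : ℕ)) / 2) * (1 - c ^ (nL - j + 1)) / (1 - c)) ∧
    (∀ i : Fin (nL + nG), (i : ℕ) = nL + g - 1 →
        R i = (c * (1 - c ^ (nL + 1 - j)) / (2 * (1 - c))) *
            ((((nG : ℝ) - 1) - c * ((nG : ℝ) - 2)) /
              ((((nG : ℝ) - 1) - c * ((nG : ℝ) - 2)) - c ^ 2)) + 1 / (1 - c)) ∧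
    (∀ i : Fin (nL + nG), nL ≤ (i : ℕ) → (i : ℕ) ≠ nL + g - 1 →
        R i = (c ^ 2 * (1 - c ^ (nL + 1 - j)) / (2 * (1 - c))) *
            (1 / ((((nG : ℝ) - 1) - c * ((nG : ℝ) - 2)) - c ^ 2)) + 1 / (1 - c)) := by
  have hm2 : (2 : ℝ) ≤ (nG : ℝ) := by exact_mod_cast hnG
  set M := (1 : Matrix (Fin (nL + nG)) (Fin (nL + nG)) ℝ) - c • A.transpose with hM
  -- entries of `A` are nonnegative
  have hApos : ∀ r s : Fin (nL + nG), 0 ≤ A r s := by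
    intro r s
    rw [hA]
    split_ifs <;> norm_num
    all_goals omega
  -- the diagonal of `A` vanishes
  have hdiag : ∀ k : Fin (nL + nG), A k k = 0 := by
    intro k
    rw [hA]
    split_ifs with h1 h2 h3 h4 h5 <;> try rfl
    · exfalso; rcases h3 with h | h <;> omega
    · exfalso; omega
    · exfalso; exact h5.2 rfl
  -- row sums of `A` are at most 1
  have hrow : ∀ k : Fin (nL + nG), (∑ i, A k i) ≤ 1 := by
    intro k
    rcases lt_or_ge (k : ℕ) nL with hk | hk
    · by_cases hkj : (k : ℕ) + 1 = j
      · -- row `j - 1` : two weights 1/2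
        have hk1 : (k : ℕ) - 1 < nL + nG := by omega
        have hk2 : nL + g - 1 < nL + nG := by omega
        have hb : ∀ i : Fin (nL + nG), A k i ≤
            (if i = (⟨(k : ℕ) - 1, hk1⟩ : Fin (nL + nG)) then (1 : ℝ) / 2 else 0) +
            (if i = (⟨nL + g - 1, hk2⟩ : Fin (nL + nG)) then (1 : ℝ) / 2 else 0) := by
          intro i
          rw [hA, if_pos hk, if_pos hkj]
          have e1 : (0:ℝ) ≤ (if i = (⟨(k : ℕ) - 1, hk1⟩ : Fin (nL + nG)) then (1:ℝ)/2 else 0) := by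
            split_ifs <;> norm_num
          have e2 : (0:ℝ) ≤ (if i = (⟨nL + g - 1, hk2⟩ : Fin (nL + nG)) then (1:ℝ)/2 else 0) := by
            split_ifs <;> norm_num
          by_cases h1 : (k : ℕ) = (i : ℕ) + 1 ∨ (i : ℕ) = nL + g - 1
          · rw [if_pos h1]
            rcases h1 with h | h
            · rw [if_pos (show i = (⟨(k : ℕ) - 1, hk1⟩ : Fin (nL + nG)) from
                Fin.ext (show (i : ℕ) = (k : ℕ) - 1 by omega))]
              linarith
            · rw [if_pos (show i = (⟨nL + g - 1, hk2⟩ : Fin (nL + nG)) from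
                Fin.ext (show (i : ℕ) = nL + g - 1 from h))]
              linarith
          · rw [if_neg h1]
            linarith
        calc (∑ i, A k i) ≤ ∑ i : Fin (nL + nG),
              ((if i = (⟨(k : ℕ) - 1, hk1⟩ : Fin (nL + nG)) then (1 : ℝ) / 2 else 0) +
               (if i = (⟨nL + g - 1, hk2⟩ : Fin (nL + nG)) then (1 : ℝ) / 2 else 0)) :=
                Finset.sum_le_sum (fun i _ => hb i)
          _ ≤ 1 := by
              rw [Finset.sum_add_distrib, Finset.sum_ite_eq' Finset.univ _ (fun _ => (1:ℝ)/2),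
                Finset.sum_ite_eq' Finset.univ _ (fun _ => (1:ℝ)/2),
                if_pos (Finset.mem_univ _), if_pos (Finset.mem_univ _)]
              norm_num
      · -- ordinary line row : one weight 1 (or none)
        have hk1 : (k : ℕ) - 1 < nL + nG := by omega
        have hb : ∀ i : Fin (nL + nG), A k i ≤
            (if i = (⟨(k : ℕ) - 1, hk1⟩ : Fin (nL + nG)) then (1 : ℝ) else 0) := by
          intro i
          rw [hA, if_pos hk, if_neg hkj]
          have e1 : (0:ℝ) ≤ (if i = (⟨(k : ℕ) - 1, hk1⟩ : Fin (nL + nG)) then (1:ℝ) else 0) := by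
            split_ifs <;> norm_num
          by_cases h1 : (k : ℕ) = (i : ℕ) + 1 ∧ (i : ℕ) < nL
          · rw [if_pos h1, if_pos (show i = (⟨(k : ℕ) - 1, hk1⟩ : Fin (nL + nG)) from
              Fin.ext (show (i : ℕ) = (k : ℕ) - 1 by omega))]
          · rw [if_neg h1]
            linarith
        calc (∑ i, A k i) ≤ ∑ i : Fin (nL + nG),
              (if i = (⟨(k : ℕ) - 1, hk1⟩ : Fin (nL + nG)) then (1 : ℝ) else 0) :=
                Finset.sum_le_sum (fun i _ => hb i)
          _ ≤ 1 := by
              rw [Finset.sum_ite_eq' Finset.univ _ (fun _ => (1:ℝ)),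
                if_pos (Finset.mem_univ _)]
    · -- graph row : nG - 1 weights 1/(nG-1)
      have hb : ∀ i : Fin (nL + nG), A k i = (1 / ((nG : ℝ) - 1)) *
          ((if nL ≤ (i : ℕ) then (1 : ℝ) else 0) - (if i = k then (1 : ℝ) else 0)) := by
        intro i
        rw [hA, if_neg (by omega)]
        by_cases h1 : i = k
        · rw [if_neg (fun h => h.2 h1), if_pos (by rw [h1]; exact hk), if_pos h1]
          ring
        · by_cases h2 : nL ≤ (i : ℕ)
          · rw [if_pos ⟨h2, h1⟩, if_pos h2, if_neg h1]; ring
          · rw [if_neg (fun h => h2 h.1), if_neg h2, if_neg h1]; ring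
      have hcount : (∑ i : Fin (nL + nG), (if nL ≤ (i : ℕ) then (1 : ℝ) else 0)) = nG := by
        rw [Fin.sum_univ_add]
        have e1 : (∑ a : Fin nL,
            if nL ≤ ((Fin.castAdd nG a : Fin (nL + nG)) : ℕ) then (1:ℝ) else 0) = 0 :=
          Finset.sum_eq_zero (fun a _ => if_neg (Nat.not_le.mpr a.isLt))
        have e2 : (∑ b : Fin nG,
            if nL ≤ ((Fin.natAdd nL b : Fin (nL + nG)) : ℕ) then (1:ℝ) else 0) = nG := by
          have e2' : ∀ b : Fin nG,
              (if nL ≤ ((Fin.natAdd nL b : Fin (nL + nG)) : ℕ) then (1:ℝ) else 0) = 1 :=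
            fun b => if_pos (Nat.le_add_right nL (b : ℕ))
          rw [Finset.sum_congr rfl (fun b _ => e2' b)]
          rw [Finset.sum_const, Finset.card_univ, Fintype.card_fin]
          simp
        rw [e1, e2, zero_add]
      rw [Finset.sum_congr rfl (fun i _ => hb i), ← Finset.mul_sum, Finset.sum_sub_distrib,
        hcount, Finset.sum_ite_eq' Finset.univ k (fun _ => (1:ℝ)), if_pos (Finset.mem_univ _)]
      have h3 : (1 / ((nG : ℝ) - 1)) * ((nG : ℝ) - 1) = 1 := by
        rw [one_div, inv_mul_cancel₀ (by nlinarith : ((nG : ℝ) - 1) ≠ 0)]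
      rw [h3]
  -- the matrix `M` has nonzero determinant (strict diagonal dominance)
  have hdet : M.det ≠ 0 := by
    apply det_ne_zero_of_sum_col_lt_diag
    intro k
    have hMkk : M k k = 1 := by
      rw [hM, Matrix.sub_apply, Matrix.smul_apply, Matrix.transpose_apply, hdiag k,
        Matrix.one_apply_eq]
      simp
    have hstep : ∀ i ∈ Finset.univ.erase k, ‖M i k‖ = c * A k i := by
      intro i hi
      have hik : i ≠ k := (Finset.mem_erase.mp hi).1
      have : M i k = -(c * A k i) := by
        rw [hM, Matrix.sub_apply, Matrix.smul_apply, Matrix.transpose_apply,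
          Matrix.one_apply_ne hik]
        simp
      rw [this, norm_neg, Real.norm_eq_abs, abs_of_nonneg (mul_nonneg hc0.le (hApos k i))]
    rw [hMkk, Finset.sum_congr rfl hstep]
    have h4 : ∑ i ∈ Finset.univ.erase k, c * A k i ≤ ∑ i, c * A k i :=
      Finset.sum_le_sum_of_subset_of_nonneg (Finset.erase_subset _ _)
        (fun i _ _ => mul_nonneg hc0.le (hApos k i))
    have h5 : (∑ i, c * A k i) = c * ∑ i, A k i := (Finset.mul_sum _ _ _).symm
    have h6 : c * (∑ i, A k i) ≤ c * 1 := by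
      exact mul_le_mul_of_nonneg_left (hrow k) hc0.le
    rw [norm_one]
    calc ∑ i ∈ Finset.univ.erase k, c * A k i ≤ c * ∑ i, A k i := by rw [← h5]; exact h4
      _ ≤ c * 1 := h6
      _ < 1 := by linarith
  -- `M` applied to the candidate vector gives the all-ones vector
  have hkey := LineCG.key nL nG hnG j hj1 hj2 g hg1 hg2 c hc0 hc1 A hA
  have hMR : M *ᵥ (LineCG.R0 nL nG j g c) = fun _ => 1 := by
    funext s
    have h1 : (M *ᵥ (LineCG.R0 nL nG j g c)) s =
        LineCG.R0 nL nG j g c s - c * ∑ r, A r s * LineCG.R0 nL nG j g c r := by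
      rw [hM, Matrix.sub_mulVec, Matrix.smul_mulVec, Matrix.one_mulVec]
      simp only [Pi.sub_apply, Pi.smul_apply, smul_eq_mul, Matrix.mulVec,
        dotProduct, Matrix.transpose_apply]
    rw [h1, hkey s]
  -- hence `R` equals the candidate vector
  have hRR : R = LineCG.R0 nL nG j g c := by
    rw [hR]
    conv_lhs => rw [← hMR]
    rw [Matrix.mulVec_mulVec, Matrix.nonsing_inv_mul M (isUnit_iff_ne_zero.mpr hdet),
      Matrix.one_mulVec]
  refine ⟨?_, ?_, ?_, ?_⟩
  · intro i h1 h2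
    rw [hRR]; unfold LineCG.R0
    rw [if_pos h1, if_pos h2]
  · intro i h
    rw [hRR]; unfold LineCG.R0
    rw [if_pos (by omega), if_neg (by omega)]
  · intro i h
    rw [hRR]; unfold LineCG.R0
    rw [if_neg (by omega), if_pos h]
  · intro i h1 h2
    rw [hRR]; unfold LineCG.R0
    rw [if_neg (by omega), if_neg h2]
end

section
/- Line node embedded in a complete graph: let node j of a simple line with n_L nodes be a member of a complete graph with n_G ≥ 2 nodes (node j has n_G outgoing links of weight 1/n_G: to node j-1 of the line and to the n_G - 1 other graph nodes). Then R_i = (1-c^{n_L+1-i})/(1-c) for i > j; R_j = ((1-c^{n_L+1-j})/(1-c) + c(n_G-1)/((n_G-1)-c(n_G-2))) · n_G((n_G-1)-c(n_G-2))/(n_G((n_G-1)-c(n_G-2)) - c²(n_G-1)); R_i = c^{j-i} R_j / n_G + (1-c^{j-i})/(1-c) for i < j; and each graph node not in the line has R = ((c+n_G)(n_G-1)(1-c) + (n_G-1)c²(1-c^{n_L-j}))/((1-c)(n_G(n_G-1)-(n_G-1)c²-n_G(n_G-2)c)). -/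
set_option maxHeartbeats 2000000

open Matrix

private lemma sum_fin_single {n : ℕ} {f : Fin n → ℝ} {t : ℕ} (ht : t < n)
    (h0 : ∀ s : Fin n, (s : ℕ) ≠ t → f s = 0) :
    ∑ s : Fin n, f s = f ⟨t, ht⟩ := by
  rw [Finset.sum_eq_single (⟨t, ht⟩ : Fin n)]
  · intro b _ hb
    exact h0 b fun hv => hb (Fin.ext hv)
  · intro h
    exact absurd (Finset.mem_univ _) h

private lemma sum_fin_zero {n : ℕ} {f : Fin n → ℝ}
    (h0 : ∀ s : Fin n, f s = 0) : ∑ s : Fin n, f s = 0 :=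
  Finset.sum_eq_zero fun s _ => h0 s

private lemma sum_fin_const {n : ℕ} (x : ℝ) : ∑ _s : Fin n, x = (n : ℝ) * x := by
  rw [Finset.sum_const, Finset.card_univ, Fintype.card_fin, nsmul_eq_mul]

private lemma sum_fin_ne {n t : ℕ} (ht : t < n) (x : ℝ) :
    ∑ s : Fin n, (if (s : ℕ) ≠ t then x else 0) = (n : ℝ) * x - x := by
  have h1 : ∀ s : Fin n, (if (s : ℕ) ≠ t then x else 0)
      = x - (if (s : ℕ) = t then x else 0) := by
    intro s; by_cases h : (s : ℕ) = t <;> simp [h]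
  rw [Finset.sum_congr rfl fun s _ => h1 s, Finset.sum_sub_distrib, sum_fin_const,
    sum_fin_single ht (f := fun s : Fin n => if (s : ℕ) = t then x else 0)
      (fun s hs => if_neg hs), if_pos rfl]

/-- A simple line on `nL` nodes where node `j` is itself a member of a complete graph
on `nG ≥ 2` nodes (node `j` has `nG` links of weight `1/nG`: one to node `j-1` and
one to each of the `nG-1` other graph nodes, indices `nL,…,nL+nG-2`): formulas for
the non-normalized PageRank of every node. -/
theorem line_node_in_complete_graph_pagerank (nL nG : ℕ) (hnG : 2 ≤ nG)
    (j : ℕ) (hj1 : 2 ≤ j) (hj2 : j ≤ nL)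
    (c : ℝ) (hc0 : 0 < c) (hc1 : c < 1)
    (A : Matrix (Fin (nL + (nG - 1))) (Fin (nL + (nG - 1))) ℝ)
    (hA : ∀ r s : Fin (nL + (nG - 1)), A r s =
      if (r : ℕ) + 1 = j then
        (if (r : ℕ) = (s : ℕ) + 1 ∨ nL ≤ (s : ℕ) then 1 / (nG : ℝ) else 0)
      else if (r : ℕ) < nL then (if (r : ℕ) = (s : ℕ) + 1 then 1 else 0)
      else (if (nL ≤ (s : ℕ) ∧ s ≠ r) ∨ (s : ℕ) + 1 = j then
        1 / ((nG : ℝ) - 1) else 0))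
    (R : Fin (nL + (nG - 1)) → ℝ)
    (hR : R = (1 - c • A.transpose)⁻¹ *ᵥ fun _ => 1)
    (Rj : ℝ)
    (hRj : Rj = ((1 - c ^ (nL + 1 - j)) / (1 - c) +
        c * ((nG : ℝ) - 1) / (((nG : ℝ) - 1) - c * ((nG : ℝ) - 2))) *
      ((nG : ℝ) * (((nG : ℝ) - 1) - c * ((nG : ℝ) - 2)) /
        ((nG : ℝ) * (((nG : ℝ) - 1) - c * ((nG : ℝ) - 2)) - c ^ 2 * ((nG : ℝ) - 1)))) :
    (∀ i : Fin (nL + (nG - 1)), (i : ℕ) < nL → j < (i : ℕ) + 1 →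
        R i = (1 - c ^ (nL - (i : ℕ))) / (1 - c)) ∧
    (∀ i : Fin (nL + (nG - 1)), (i : ℕ) + 1 = j → R i = Rj) ∧
    (∀ i : Fin (nL + (nG - 1)), (i : ℕ) + 1 < j →
        R i = c ^ (j - 1 - (i : ℕ)) * Rj / (nG : ℝ) +
          (1 - c ^ (j - 1 - (i : ℕ))) / (1 - c)) ∧
    (∀ i : Fin (nL + (nG - 1)), nL ≤ (i : ℕ) →
        R i = ((c + (nG : ℝ)) * ((nG : ℝ) - 1) * (1 - c) +
            ((nG : ℝ) - 1) * c ^ 2 * (1 - c ^ (nL - j))) /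
          ((1 - c) * ((nG : ℝ) * ((nG : ℝ) - 1) - ((nG : ℝ) - 1) * c ^ 2 -
            (nG : ℝ) * ((nG : ℝ) - 2) * c))) := by
  -- basic numeric facts
  have h2R : (2 : ℝ) ≤ (nG : ℝ) := by exact_mod_cast hnG
  have hmcast : ((nG - 1 : ℕ) : ℝ) = (nG : ℝ) - 1 := by
    have h1 : (1 : ℕ) ≤ nG := by omega
    push_cast [h1]; ring
  have h1c : (0 : ℝ) < 1 - c := by linarith
  have hnG0 : (nG : ℝ) ≠ 0 := by linarith
  have hnG1 : ((nG : ℝ) - 1) ≠ 0 := by linarith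
  have hD : (0 : ℝ) < ((nG : ℝ) - 1) - c * ((nG : ℝ) - 2) := by nlinarith
  have hden : (0 : ℝ) <
      (nG : ℝ) * (((nG : ℝ) - 1) - c * ((nG : ℝ) - 2)) - c ^ 2 * ((nG : ℝ) - 1) := by
    nlinarith [mul_nonneg (mul_nonneg (by linarith : (0:ℝ) ≤ 1 - c)
        (by linarith : (0:ℝ) ≤ (nG:ℝ))) (by linarith : (0:ℝ) ≤ (nG:ℝ) - 2),
      mul_pos (by nlinarith : (0:ℝ) < 1 - c^2) (by linarith : (0:ℝ) < (nG:ℝ) - 1)]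
  have hden2pos : (0 : ℝ) < ((nG : ℝ) * ((nG : ℝ) - 1) - ((nG : ℝ) - 1) * c ^ 2 -
      (nG : ℝ) * ((nG : ℝ) - 2) * c) := by nlinarith [hden]
  have hden2 : ((nG : ℝ) * ((nG : ℝ) - 1) - ((nG : ℝ) - 1) * c ^ 2 -
      (nG : ℝ) * ((nG : ℝ) - 2) * c) ≠ 0 := hden2pos.ne'
  -- the candidate solution
  obtain ⟨RG, hRG⟩ : ∃ RG : ℝ, RG = ((c + (nG : ℝ)) * ((nG : ℝ) - 1) * (1 - c) +
      ((nG : ℝ) - 1) * c ^ 2 * (1 - c ^ (nL - j))) /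
      ((1 - c) * ((nG : ℝ) * ((nG : ℝ) - 1) - ((nG : ℝ) - 1) * c ^ 2 -
        (nG : ℝ) * ((nG : ℝ) - 2) * c)) := ⟨_, rfl⟩
  obtain ⟨R', hR'def⟩ : ∃ R' : Fin (nL + (nG - 1)) → ℝ, R' = fun i : Fin (nL + (nG - 1)) =>
      if (i : ℕ) + 1 < j then
        c ^ (j - 1 - (i : ℕ)) * Rj / (nG : ℝ) + (1 - c ^ (j - 1 - (i : ℕ))) / (1 - c)
      else if (i : ℕ) + 1 = j then Rj
      else if (i : ℕ) < nL then (1 - c ^ (nL - (i : ℕ))) / (1 - c)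
      else RG := ⟨_, rfl⟩
  have hR'1 : ∀ i : Fin (nL + (nG - 1)), (i : ℕ) + 1 < j →
      R' i = c ^ (j - 1 - (i : ℕ)) * Rj / (nG : ℝ) +
        (1 - c ^ (j - 1 - (i : ℕ))) / (1 - c) := by
    intro i h; rw [hR'def]; simp only; rw [if_pos h]
  have hR'2 : ∀ i : Fin (nL + (nG - 1)), (i : ℕ) + 1 = j → R' i = Rj := by
    intro i h; rw [hR'def]; simp only; rw [if_neg (by omega), if_pos h]
  have hR'3 : ∀ i : Fin (nL + (nG - 1)), j ≤ (i : ℕ) → (i : ℕ) < nL →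
      R' i = (1 - c ^ (nL - (i : ℕ))) / (1 - c) := by
    intro i h hn; rw [hR'def]; simp only
    rw [if_neg (by omega), if_neg (by omega), if_pos hn]
  have hR'4 : ∀ i : Fin (nL + (nG - 1)), nL ≤ (i : ℕ) → R' i = RG := by
    intro i h; rw [hR'def]; simp only
    rw [if_neg (by omega), if_neg (by omega), if_neg (by omega)]
  -- entries of A are nonnegative, rows sum to at most 1
  have hApos : ∀ r s, 0 ≤ A r s := by
    intro r s
    have hx : (0 : ℝ) ≤ 1 / (nG : ℝ) := by positivity
    have hy : (0 : ℝ) ≤ 1 / ((nG : ℝ) - 1) := by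
      apply div_nonneg (by norm_num); linarith
    rw [hA]
    split_ifs <;> first | linarith | norm_num
  have hArow : ∀ r, ∑ s, A r s ≤ 1 := by
    intro r
    have hrlt := r.isLt
    rw [show (∑ s, A r s) = (∑ s : Fin nL, A r (Fin.castAdd (nG - 1) s)) +
        ∑ s : Fin (nG - 1), A r (Fin.natAdd nL s) from Fin.sum_univ_add fun s => A r s]
    rcases Nat.lt_or_ge (r : ℕ) nL with hr | hr
    · by_cases hrj : (r : ℕ) + 1 = j
      · -- row j-1
        have h0 : ∀ s : Fin nL, (s : ℕ) ≠ j - 2 → A r (Fin.castAdd (nG - 1) s) = 0 := by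
          intro s hs
          have hslt := s.isLt
          rw [hA]
          simp only [Fin.coe_castAdd, ne_eq, Fin.ext_iff]
          split_ifs <;> first | rfl | omega | tauto
        rw [sum_fin_single (show j - 2 < nL by omega) h0]
        have hpt : A r (Fin.castAdd (nG - 1) (⟨j - 2, by omega⟩ : Fin nL)) = 1 / (nG : ℝ) := by
          rw [hA]
          simp only [Fin.coe_castAdd, ne_eq, Fin.ext_iff]
          split_ifs <;> first | rfl | omega | tauto
        rw [hpt]
        have hg : ∀ t : Fin (nG - 1), A r (Fin.natAdd nL t) = 1 / (nG : ℝ) := by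
          intro t
          rw [hA]
          simp only [Fin.coe_natAdd, ne_eq, Fin.ext_iff]
          split_ifs <;> first | rfl | omega | tauto
        rw [Finset.sum_congr rfl fun t _ => hg t, sum_fin_const, hmcast]
        have heq : 1 / (nG : ℝ) + ((nG : ℝ) - 1) * (1 / (nG : ℝ)) = 1 := by
          field_simp [hnG0, hnG1, h1c.ne', hD.ne', hden.ne', hden2]
          ring
        linarith
      · -- ordinary line row
        have hg : ∀ t : Fin (nG - 1), A r (Fin.natAdd nL t) = 0 := by
          intro t
          rw [hA]
          simp only [Fin.coe_natAdd, ne_eq, Fin.ext_iff]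
          split_ifs <;> first | rfl | omega | tauto
        rw [Finset.sum_congr rfl fun t _ => hg t, Finset.sum_const_zero, add_zero]
        by_cases hr0 : (r : ℕ) = 0
        · have h0 : ∀ s : Fin nL, A r (Fin.castAdd (nG - 1) s) = 0 := by
            intro s
            rw [hA]
            simp only [Fin.coe_castAdd, ne_eq, Fin.ext_iff]
            split_ifs <;> first | rfl | omega | tauto
          rw [sum_fin_zero h0]
          norm_num
        · have h0 : ∀ s : Fin nL, (s : ℕ) ≠ (r : ℕ) - 1 → A r (Fin.castAdd (nG - 1) s) = 0 := by
            intro s hs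
            rw [hA]
            simp only [Fin.coe_castAdd, ne_eq, Fin.ext_iff]
            split_ifs <;> first | rfl | omega | tauto
          rw [sum_fin_single (show (r : ℕ) - 1 < nL by omega) h0]
          have hpt : A r (Fin.castAdd (nG - 1) (⟨(r : ℕ) - 1, by omega⟩ : Fin nL)) = 1 := by
            rw [hA]
            simp only [Fin.coe_castAdd, ne_eq, Fin.ext_iff]
            split_ifs <;> first | rfl | omega | tauto
          rw [hpt]
    · -- graph row
      have h0 : ∀ s : Fin nL, (s : ℕ) ≠ j - 1 → A r (Fin.castAdd (nG - 1) s) = 0 := by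
        intro s hs
        rw [hA]
        simp only [Fin.coe_castAdd, ne_eq, Fin.ext_iff]
        split_ifs <;> first | rfl | omega | tauto
      rw [sum_fin_single (show j - 1 < nL by omega) h0]
      have hpt : A r (Fin.castAdd (nG - 1) (⟨j - 1, by omega⟩ : Fin nL)) = 1 / ((nG : ℝ) - 1) := by
        rw [hA]
        simp only [Fin.coe_castAdd, ne_eq, Fin.ext_iff]
        split_ifs <;> first | rfl | omega | tauto
      rw [hpt]
      have hg : ∀ t : Fin (nG - 1), A r (Fin.natAdd nL t) =
          if (t : ℕ) ≠ (r : ℕ) - nL then 1 / ((nG : ℝ) - 1) else 0 := by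
        intro t
        rw [hA]
        simp only [Fin.coe_natAdd, ne_eq, Fin.ext_iff]
        split_ifs <;> first | rfl | omega | tauto
      rw [Finset.sum_congr rfl fun t _ => hg t,
        sum_fin_ne (show (r : ℕ) - nL < nG - 1 by omega), hmcast]
      have heq : 1 / ((nG : ℝ) - 1) +
          (((nG : ℝ) - 1) * (1 / ((nG : ℝ) - 1)) - 1 / ((nG : ℝ) - 1)) = 1 := by
        field_simp [hnG0, hnG1, h1c.ne', hD.ne', hden.ne', hden2]
        ring
      linarith
  -- the candidate solves the linear system
  have hMR : (1 - c • A.transpose) *ᵥ R' = fun _ => 1 := by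
    rw [Matrix.sub_mulVec, Matrix.smul_mulVec, Matrix.one_mulVec]
    funext r
    simp only [Pi.sub_apply, Pi.smul_apply, smul_eq_mul, Matrix.mulVec, dotProduct,
      Matrix.transpose_apply]
    rw [show (∑ s, A s r * R' s) =
        (∑ s : Fin nL, A (Fin.castAdd (nG - 1) s) r * R' (Fin.castAdd (nG - 1) s)) +
        ∑ s : Fin (nG - 1), A (Fin.natAdd nL s) r * R' (Fin.natAdd nL s) from
      Fin.sum_univ_add fun s => A s r * R' s]
    have hrlt := r.isLt
    rcases Nat.lt_or_ge (r : ℕ) nL with hr | hr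
    · rcases Nat.lt_trichotomy ((r : ℕ) + 1) j with hcase | hcase | hcase
      · -- line node strictly left of j-1
        have hg : ∀ t : Fin (nG - 1), A (Fin.natAdd nL t) r * R' (Fin.natAdd nL t) = 0 := by
          intro t
          rw [hA, mul_eq_zero]
          left
          simp only [Fin.coe_natAdd, ne_eq, Fin.ext_iff]
          split_ifs <;> first | rfl | omega | tauto
        rw [sum_fin_zero hg, add_zero]
        have h0 : ∀ s : Fin nL, (s : ℕ) ≠ (r : ℕ) + 1 →
            A (Fin.castAdd (nG - 1) s) r * R' (Fin.castAdd (nG - 1) s) = 0 := by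
          intro s hs
          rw [hA, mul_eq_zero]
          left
          simp only [Fin.coe_castAdd, ne_eq, Fin.ext_iff]
          split_ifs <;> first | rfl | omega | tauto
        rw [sum_fin_single (show (r : ℕ) + 1 < nL by omega) h0]
        have hco : ((Fin.castAdd (nG - 1) (⟨(r : ℕ) + 1, by omega⟩ : Fin nL)) : ℕ)
            = (r : ℕ) + 1 := rfl
        rcases Nat.lt_or_ge ((r : ℕ) + 2) j with hcc | hcc
        · -- next node still left of j-1
          have hpt : A (Fin.castAdd (nG - 1) (⟨(r : ℕ) + 1, by omega⟩ : Fin nL)) r = 1 := by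
            rw [hA]
            simp only [Fin.coe_castAdd, ne_eq, Fin.ext_iff]
            split_ifs <;> first | rfl | omega | tauto
          rw [hpt, hR'1 r hcase, hR'1 _ (by rw [hco]; omega), hco,
            show c ^ (j - 1 - (r : ℕ)) = c ^ (j - 1 - ((r : ℕ) + 1)) * c from by
              rw [show j - 1 - (r : ℕ) = (j - 1 - ((r : ℕ) + 1)) + 1 from by omega, pow_succ]]
          field_simp [hnG0, hnG1, h1c.ne', hD.ne', hden.ne', hden2]
          all_goals ring
        · -- next node is j-1
          have hcc' : (r : ℕ) + 2 = j := by omega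
          have hpt : A (Fin.castAdd (nG - 1) (⟨(r : ℕ) + 1, by omega⟩ : Fin nL)) r
              = 1 / (nG : ℝ) := by
            rw [hA]
            simp only [hco, ne_eq, Fin.ext_iff]
            split_ifs <;> first | rfl | omega | tauto
          rw [hpt, hR'1 r hcase, hR'2 _ (by rw [hco]; omega),
            show j - 1 - (r : ℕ) = 1 from by omega, pow_one]
          field_simp [hnG0, hnG1, h1c.ne', hD.ne', hden.ne', hden2]
          all_goals ring
      · -- the node j-1 itself
        have hg : ∀ t : Fin (nG - 1), A (Fin.natAdd nL t) r * R' (Fin.natAdd nL t)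
            = 1 / ((nG : ℝ) - 1) * RG := by
          intro t
          rw [hR'4 _ (by simp only [Fin.coe_natAdd]; omega), hA]
          simp only [Fin.coe_natAdd, ne_eq, Fin.ext_iff]
          split_ifs <;> first | rfl | omega | tauto
        rw [Finset.sum_congr rfl fun t _ => hg t, sum_fin_const, hmcast]
        by_cases hjn : j < nL
        · have h0 : ∀ s : Fin nL, (s : ℕ) ≠ j →
              A (Fin.castAdd (nG - 1) s) r * R' (Fin.castAdd (nG - 1) s) = 0 := by
            intro s hs
            rw [hA, mul_eq_zero]
            left
            simp only [Fin.coe_castAdd, ne_eq, Fin.ext_iff]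
            split_ifs <;> first | rfl | omega | tauto
          rw [sum_fin_single (show j < nL by omega) h0]
          have hco : ((Fin.castAdd (nG - 1) (⟨j, by omega⟩ : Fin nL)) : ℕ) = j := rfl
          have hpt : A (Fin.castAdd (nG - 1) (⟨j, by omega⟩ : Fin nL)) r = 1 := by
            rw [hA]
            simp only [Fin.coe_castAdd, ne_eq, Fin.ext_iff]
            split_ifs <;> first | rfl | omega | tauto
          rw [hpt, hR'2 r hcase, hR'3 _ (by rw [hco]) (by rw [hco]; omega), hco, hRj, hRG,
            show c ^ (nL + 1 - j) = c ^ (nL - j) * c from by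
              rw [show nL + 1 - j = (nL - j) + 1 from by omega, pow_succ]]
          have hY : ((nG : ℝ) - 1) * ((nG : ℝ) - c ^ 2) - c * (nG : ℝ) * ((nG : ℝ) - 2) ≠ 0 := by
            intro h; apply hden2; linear_combination h
          field_simp [hnG0, hnG1, h1c.ne', hD.ne', hden.ne', hden2, hY]
          all_goals ring
        · have hjn' : j = nL := by omega
          have h0 : ∀ s : Fin nL,
              A (Fin.castAdd (nG - 1) s) r * R' (Fin.castAdd (nG - 1) s) = 0 := by
            intro s
            have hslt := s.isLt
            rw [hA, mul_eq_zero]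
            left
            simp only [Fin.coe_castAdd, ne_eq, Fin.ext_iff]
            split_ifs <;> first | rfl | omega | tauto
          rw [sum_fin_zero h0, hR'2 r hcase, hRj, hRG, show nL - j = 0 from by omega,
            show nL + 1 - j = 1 from by omega, pow_zero, pow_one]
          have hY : ((nG : ℝ) - 1) * ((nG : ℝ) - c ^ 2) - c * (nG : ℝ) * ((nG : ℝ) - 2) ≠ 0 := by
            intro h; apply hden2; linear_combination h
          field_simp [hnG0, hnG1, h1c.ne', hD.ne', hden.ne', hden2, hY]
          all_goals ring
      · -- line node right of j-1
        have hg : ∀ t : Fin (nG - 1), A (Fin.natAdd nL t) r * R' (Fin.natAdd nL t) = 0 := by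
          intro t
          rw [hA, mul_eq_zero]
          left
          simp only [Fin.coe_natAdd, ne_eq, Fin.ext_iff]
          split_ifs <;> first | rfl | omega | tauto
        rw [sum_fin_zero hg, add_zero]
        rcases Nat.lt_or_ge ((r : ℕ) + 1) nL with hrn | hrn
        · have h0 : ∀ s : Fin nL, (s : ℕ) ≠ (r : ℕ) + 1 →
              A (Fin.castAdd (nG - 1) s) r * R' (Fin.castAdd (nG - 1) s) = 0 := by
            intro s hs
            rw [hA, mul_eq_zero]
            left
            simp only [Fin.coe_castAdd, ne_eq, Fin.ext_iff]
            split_ifs <;> first | rfl | omega | tauto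
          rw [sum_fin_single hrn h0]
          have hco : ((Fin.castAdd (nG - 1) (⟨(r : ℕ) + 1, hrn⟩ : Fin nL)) : ℕ)
              = (r : ℕ) + 1 := rfl
          have hpt : A (Fin.castAdd (nG - 1) (⟨(r : ℕ) + 1, hrn⟩ : Fin nL)) r = 1 := by
            rw [hA]
            simp only [Fin.coe_castAdd, ne_eq, Fin.ext_iff]
            split_ifs <;> first | rfl | omega | tauto
          rw [hpt, hR'3 r (by omega) hr, hR'3 _ (by rw [hco]; omega) (by rw [hco]; omega), hco,
            show c ^ (nL - (r : ℕ)) = c ^ (nL - ((r : ℕ) + 1)) * c from by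
              rw [show nL - (r : ℕ) = (nL - ((r : ℕ) + 1)) + 1 from by omega, pow_succ]]
          field_simp [hnG0, hnG1, h1c.ne', hD.ne', hden.ne', hden2]
          all_goals ring
        · have h0 : ∀ s : Fin nL,
              A (Fin.castAdd (nG - 1) s) r * R' (Fin.castAdd (nG - 1) s) = 0 := by
            intro s
            have hslt := s.isLt
            rw [hA, mul_eq_zero]
            left
            simp only [Fin.coe_castAdd, ne_eq, Fin.ext_iff]
            split_ifs <;> first | rfl | omega | tauto
          rw [sum_fin_zero h0, hR'3 r (by omega) hr, show nL - (r : ℕ) = 1 from by omega,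
            pow_one]
          field_simp [hnG0, hnG1, h1c.ne', hD.ne', hden.ne', hden2]
          ring
    · -- graph node
      have h0 : ∀ s : Fin nL, (s : ℕ) ≠ j - 1 →
          A (Fin.castAdd (nG - 1) s) r * R' (Fin.castAdd (nG - 1) s) = 0 := by
        intro s hs
        rw [hA, mul_eq_zero]
        left
        simp only [Fin.coe_castAdd, ne_eq, Fin.ext_iff]
        split_ifs <;> first | rfl | omega | tauto
      rw [sum_fin_single (show j - 1 < nL by omega) h0]
      have hco : ((Fin.castAdd (nG - 1) (⟨j - 1, by omega⟩ : Fin nL)) : ℕ) = j - 1 := rfl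
      have hpt : A (Fin.castAdd (nG - 1) (⟨j - 1, by omega⟩ : Fin nL)) r = 1 / (nG : ℝ) := by
        rw [hA]
        simp only [Fin.coe_castAdd, ne_eq, Fin.ext_iff]
        split_ifs <;> first | rfl | omega | tauto
      rw [hpt, hR'4 r hr, hR'2 _ (by rw [hco]; omega)]
      have hg : ∀ t : Fin (nG - 1), A (Fin.natAdd nL t) r * R' (Fin.natAdd nL t)
          = if (t : ℕ) ≠ (r : ℕ) - nL then 1 / ((nG : ℝ) - 1) * RG else 0 := by
        intro t
        rw [hR'4 _ (by simp only [Fin.coe_natAdd]; omega), hA]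
        simp only [Fin.coe_natAdd, ne_eq, Fin.ext_iff]
        split_ifs <;> first | rfl | omega | tauto | simp | tauto
      rw [Finset.sum_congr rfl fun t _ => hg t,
        sum_fin_ne (show (r : ℕ) - nL < nG - 1 by omega), hmcast, hRj, hRG,
        show c ^ (nL + 1 - j) = c ^ (nL - j) * c from by
          rw [show nL + 1 - j = (nL - j) + 1 from by omega, pow_succ]]
      have hY : ((nG : ℝ) - 1) * ((nG : ℝ) - c ^ 2) - c * (nG : ℝ) * ((nG : ℝ) - 2) ≠ 0 := by
        intro h; apply hden2; linear_combination h
      field_simp [hnG0, hnG1, h1c.ne', hD.ne', hden.ne', hden2, hY]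
      ring
  -- the system matrix is nonsingular
  have hdet : (1 - c • A.transpose).det ≠ 0 := by
    have htr : (1 - c • A.transpose) = (1 - c • A).transpose := by
      rw [Matrix.transpose_sub, Matrix.transpose_smul, Matrix.transpose_one]
    rw [htr, Matrix.det_transpose]
    intro h0
    obtain ⟨v, hv0, hv⟩ := Matrix.exists_mulVec_eq_zero_iff.mpr h0
    rw [Matrix.sub_mulVec, Matrix.smul_mulVec, Matrix.one_mulVec] at hv
    have hvr : ∀ r, v r = c * ∑ s, A r s * v s := by
      intro r
      have h := congrFun hv r
      simp only [Pi.sub_apply, Pi.smul_apply, Pi.zero_apply, smul_eq_mul,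
        Matrix.mulVec, dotProduct] at h
      linarith
    haveI : Nonempty (Fin (nL + (nG - 1))) := ⟨⟨0, by omega⟩⟩
    obtain ⟨r0, hr0⟩ := Finite.exists_max fun r => |v r|
    have hpos : 0 < |v r0| := by
      obtain ⟨i, hi⟩ := Function.ne_iff.mp hv0
      calc (0:ℝ) < |v i| := abs_pos.mpr hi
        _ ≤ |v r0| := hr0 i
    have hle : |v r0| ≤ c * |v r0| := by
      calc |v r0| = |c * ∑ s, A r0 s * v s| := by rw [← hvr]
        _ = c * |∑ s, A r0 s * v s| := by rw [abs_mul, abs_of_pos hc0]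
        _ ≤ c * ∑ s, |A r0 s * v s| :=
            mul_le_mul_of_nonneg_left (Finset.abs_sum_le_sum_abs _ _) hc0.le
        _ = c * ∑ s, A r0 s * |v s| := by
            congr 1
            refine Finset.sum_congr rfl fun s _ => ?_
            rw [abs_mul, abs_of_nonneg (hApos r0 s)]
        _ ≤ c * ∑ s, A r0 s * |v r0| := by
            refine mul_le_mul_of_nonneg_left ?_ hc0.le
            exact Finset.sum_le_sum fun s _ => mul_le_mul_of_nonneg_left (hr0 s) (hApos r0 s)
        _ = c * ((∑ s, A r0 s) * |v r0|) := by rw [← Finset.sum_mul]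
        _ ≤ c * (1 * |v r0|) := by
            refine mul_le_mul_of_nonneg_left ?_ hc0.le
            exact mul_le_mul_of_nonneg_right (hArow r0) (abs_nonneg _)
        _ = c * |v r0| := by ring
    nlinarith
  -- hence R is the candidate
  have hRR' : R = R' := by
    rw [hR, ← hMR, Matrix.mulVec_mulVec,
      Matrix.nonsing_inv_mul _ (isUnit_iff_ne_zero.mpr hdet), Matrix.one_mulVec]
  refine ⟨?_, ?_, ?_, ?_⟩
  · intro i h1 h2
    rw [hRR', hR'3 i (by omega) h1]
  · intro i h
    rw [hRR', hR'2 i h]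
  · intro i h
    rw [hRR', hR'1 i h]
  · intro i h
    rw [hRR', hR'4 i h, hRG]
end

section
/- Column sum bound: for any row-substochastic non-negative n×n matrix A and 0 < c < 1, every column sum of (I - cA^T)^{-1} is at most 1/(1-c), with equality for column j if and only if all mass starting from node j is preserved forever (i.e., every power (A^k)_{j·} has row sum 1, meaning no dangling node is reachable from j). -/
open Matrix Finset

/-- Column sum bound: for a non-negative row-substochastic matrix `A` and `0 < c < 1`,
every column sum of `(I - cAᵀ)⁻¹` is at most `1/(1-c)`, with equality for column `j`
if and only if every power `A^k` has row `j` summing to `1` (no dangling node is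
reachable from `j`). -/
theorem column_sum_bound (n : ℕ) (c : ℝ) (hc0 : 0 < c) (hc1 : c < 1)
    (A : Matrix (Fin n) (Fin n) ℝ)
    (hA_nonneg : ∀ i j : Fin n, 0 ≤ A i j)
    (hA_rows : ∀ i : Fin n, ∑ j, A i j ≤ 1) :
    ∀ j : Fin n,
      (∑ i, (1 - c • A.transpose)⁻¹ i j) ≤ 1 / (1 - c) ∧
      ((∑ i, (1 - c • A.transpose)⁻¹ i j) = 1 / (1 - c) ↔
        ∀ k : ℕ, ∑ s, (A ^ k) j s = 1) := by
  intro j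
  have h1c : (0:ℝ) < 1 - c := by linarith
  set M : Matrix (Fin n) (Fin n) ℝ := 1 - c • A with hM
  have hrow_nn : ∀ i, (0:ℝ) ≤ ∑ s, A i s := fun i =>
    Finset.sum_nonneg fun s _ => hA_nonneg i s
  -- kernel of M is trivial
  have hker : ∀ u : Fin n → ℝ, M *ᵥ u = 0 → u = 0 := by
    intro u hu
    have hu' : ∀ i, u i = c * ∑ s, A i s * u s := by
      intro i
      have h0 := congrFun hu i
      simp only [hM, Matrix.sub_mulVec, Matrix.one_mulVec, Matrix.smul_mulVec,
        Pi.sub_apply, Pi.smul_apply, Pi.zero_apply, smul_eq_mul] at h0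
      have h1 : (A *ᵥ u) i = ∑ s, A i s * u s := rfl
      rw [h1] at h0
      linarith
    obtain ⟨i0, -, hi0⟩ := Finset.exists_max_image Finset.univ (fun i => |u i|)
      ⟨j, Finset.mem_univ j⟩
    have hbound : |u i0| ≤ c * |u i0| := by
      calc |u i0| = c * |∑ s, A i0 s * u s| := by
            rw [hu' i0, abs_mul, abs_of_pos hc0]
        _ ≤ c * ∑ s, A i0 s * |u i0| := by
            refine mul_le_mul_of_nonneg_left ?_ hc0.le
            refine le_trans (Finset.abs_sum_le_sum_abs _ _) ?_
            refine Finset.sum_le_sum fun s _ => ?_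
            rw [abs_mul, abs_of_nonneg (hA_nonneg i0 s)]
            exact mul_le_mul_of_nonneg_left (hi0 s (Finset.mem_univ s)) (hA_nonneg i0 s)
        _ = c * ((∑ s, A i0 s) * |u i0|) := by rw [← Finset.sum_mul]
        _ ≤ c * (1 * |u i0|) := by
            refine mul_le_mul_of_nonneg_left
              (mul_le_mul_of_nonneg_right (hA_rows i0) (abs_nonneg _)) hc0.le
        _ = c * |u i0| := by ring
    have h0 : |u i0| = 0 := by nlinarith [abs_nonneg (u i0)]
    funext i
    have h2 := hi0 i (Finset.mem_univ i)
    rw [h0] at h2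
    simpa using abs_eq_zero.mp (le_antisymm h2 (abs_nonneg _))
  have hMunit : IsUnit M := by
    rw [← Matrix.mulVec_injective_iff_isUnit]
    intro v w hvw
    have : M *ᵥ (v - w) = 0 := by
      rw [Matrix.mulVec_sub, hvw, sub_self]
    have := hker _ this
    ext i
    have := congrFun this i
    simpa [sub_eq_zero] using this
  have hMdet : IsUnit M.det := (Matrix.isUnit_iff_isUnit_det M).mp hMunit
  set x : Fin n → ℝ := M⁻¹ *ᵥ (fun _ => 1) with hxdef
  have hMx : M *ᵥ x = fun _ => 1 := by
    rw [hxdef, Matrix.mulVec_mulVec, Matrix.mul_nonsing_inv M hMdet, Matrix.one_mulVec]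
  have hx : ∀ i, x i = 1 + c * (A *ᵥ x) i := by
    intro i
    have := congrFun hMx i
    simp only [hM, Matrix.sub_mulVec, Matrix.one_mulVec, Matrix.smul_mulVec,
      Pi.sub_apply, Pi.smul_apply, smul_eq_mul] at this
    linarith
  -- column sum equals x j
  have hcol : (∑ i, (1 - c • A.transpose)⁻¹ i j) = x j := by
    have hMT : (1 - c • A.transpose) = Mᵀ := by
      rw [hM, Matrix.transpose_sub, Matrix.transpose_one, Matrix.transpose_smul]
    rw [hMT, ← Matrix.transpose_nonsing_inv]
    simp only [Matrix.transpose_apply]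
    rw [hxdef]
    simp [Matrix.mulVec, dotProduct]
  -- bounds on x
  have hAx_le : ∀ i (b : ℝ), (∀ s, x s ≤ b) → (A *ᵥ x) i ≤ (∑ s, A i s) * b := by
    intro i b hb
    calc (A *ᵥ x) i = ∑ s, A i s * x s := rfl
      _ ≤ ∑ s, A i s * b :=
          Finset.sum_le_sum fun s _ => mul_le_mul_of_nonneg_left (hb s) (hA_nonneg i s)
      _ = (∑ s, A i s) * b := by rw [← Finset.sum_mul]
  have hxub : ∀ i, x i ≤ 1 / (1 - c) := by
    obtain ⟨i0, -, hi0⟩ := Finset.exists_max_image Finset.univ x ⟨j, Finset.mem_univ j⟩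
    intro i
    refine le_trans (hi0 i (Finset.mem_univ i)) ?_
    rcases le_or_gt 0 (x i0) with h | h
    · have h1 : (A *ᵥ x) i0 ≤ (∑ s, A i0 s) * x i0 :=
        hAx_le i0 (x i0) fun s => hi0 s (Finset.mem_univ s)
      have h2 : (∑ s, A i0 s) * x i0 ≤ 1 * x i0 :=
        mul_le_mul_of_nonneg_right (hA_rows i0) h
      rw [le_div_iff₀ h1c]
      nlinarith [hx i0]
    · have : x i0 ≤ 1 := by
        have h1 : (A *ᵥ x) i0 ≤ (∑ s, A i0 s) * x i0 :=
          hAx_le i0 (x i0) fun s => hi0 s (Finset.mem_univ s)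
        have h2 : (∑ s, A i0 s) * x i0 ≤ 0 :=
          mul_nonpos_of_nonneg_of_nonpos (hrow_nn i0) h.le
        nlinarith [hx i0]
      have : (1:ℝ) ≤ 1 / (1 - c) := by
        rw [le_div_iff₀ h1c]; linarith
      linarith
  have hxlb : ∀ i, 0 ≤ x i := by
    obtain ⟨i1, -, hi1⟩ := Finset.exists_min_image Finset.univ x ⟨j, Finset.mem_univ j⟩
    intro i
    refine le_trans ?_ (hi1 i (Finset.mem_univ i))
    by_contra hneg
    push_neg at hneg
    have h1 : (∑ s, A i1 s) * x i1 ≤ (A *ᵥ x) i1 := by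
      calc (∑ s, A i1 s) * x i1 = ∑ s, A i1 s * x i1 := by rw [Finset.sum_mul]
        _ ≤ ∑ s, A i1 s * x s :=
            Finset.sum_le_sum fun s _ => mul_le_mul_of_nonneg_left
              (hi1 s (Finset.mem_univ s)) (hA_nonneg i1 s)
        _ = (A *ᵥ x) i1 := rfl
    have h2 : x i1 ≤ (∑ s, A i1 s) * x i1 := by
      nlinarith [hA_rows i1, hrow_nn i1]
    nlinarith [hx i1]
  -- power facts
  have hPnn : ∀ k (i s : Fin n), 0 ≤ (A ^ k) i s := by
    intro k
    induction k with
    | zero => intro i s; simp [Matrix.one_apply]; positivity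
    | succ k ih =>
      intro i s
      rw [pow_succ, Matrix.mul_apply]
      exact Finset.sum_nonneg fun t _ => mul_nonneg (ih i t) (hA_nonneg t s)
  have hr_le : ∀ k (i : Fin n), ∑ s, (A ^ k) i s ≤ 1 := by
    intro k
    induction k with
    | zero => intro i; simp [Matrix.one_apply]
    | succ k ih =>
      intro i
      have : ∑ s, (A ^ (k+1)) i s = ∑ t, A i t * ∑ s, (A ^ k) t s := by
        simp only [pow_succ', Matrix.mul_apply]
        rw [Finset.sum_comm]
        simp [Finset.mul_sum]
      rw [this]
      calc ∑ t, A i t * ∑ s, (A ^ k) t s ≤ ∑ t, A i t * 1 :=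
            Finset.sum_le_sum fun t _ => mul_le_mul_of_nonneg_left (ih t) (hA_nonneg i t)
        _ = ∑ t, A i t := by simp
        _ ≤ 1 := hA_rows i
  have hr_nn : ∀ k (i : Fin n), 0 ≤ ∑ s, (A ^ k) i s := fun k i =>
    Finset.sum_nonneg fun s _ => hPnn k i s
  -- step identity
  have hstep : ∀ (N : ℕ) (i : Fin n),
      ((A ^ N) *ᵥ x) i = (∑ s, (A ^ N) i s) + c * ((A ^ (N+1)) *ᵥ x) i := by
    intro N i
    have h1 : ((A ^ N) *ᵥ x) i = ∑ s, (A ^ N) i s * (1 + c * (A *ᵥ x) s) := by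
      simp only [Matrix.mulVec, dotProduct]
      exact Finset.sum_congr rfl fun s _ => by rw [hx s]; rfl
    rw [h1]
    have h2 : ((A ^ (N+1)) *ᵥ x) i = ∑ s, (A ^ N) i s * (A *ᵥ x) s := by
      rw [pow_succ, ← Matrix.mulVec_mulVec]
      rfl
    rw [h2, Finset.mul_sum]
    rw [← Finset.sum_add_distrib]
    refine Finset.sum_congr rfl fun s _ => by ring
  -- iterated identity
  have hiter : ∀ N : ℕ,
      x j = (∑ k ∈ Finset.range N, c ^ k * ∑ s, (A ^ k) j s) + c ^ N * ((A ^ N) *ᵥ x) j := by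
    intro N
    induction N with
    | zero => simp [Matrix.one_mulVec]
    | succ N ih =>
      rw [ih, hstep N j, Finset.sum_range_succ]
      ring
  -- bounds on (A^N *ᵥ x) j
  have hAxN_nn : ∀ N : ℕ, 0 ≤ ((A ^ N) *ᵥ x) j := by
    intro N
    have : ((A ^ N) *ᵥ x) j = ∑ s, (A ^ N) j s * x s := rfl
    rw [this]
    exact Finset.sum_nonneg fun s _ => mul_nonneg (hPnn N j s) (hxlb s)
  have hAxN_ub : ∀ N : ℕ, ((A ^ N) *ᵥ x) j ≤ 1 / (1 - c) := by
    intro N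
    calc ((A ^ N) *ᵥ x) j = ∑ s, (A ^ N) j s * x s := rfl
      _ ≤ ∑ s, (A ^ N) j s * (1 / (1 - c)) :=
          Finset.sum_le_sum fun s _ => mul_le_mul_of_nonneg_left (hxub s) (hPnn N j s)
      _ = (∑ s, (A ^ N) j s) * (1 / (1 - c)) := by rw [← Finset.sum_mul]
      _ ≤ 1 * (1 / (1 - c)) := by
          refine mul_le_mul_of_nonneg_right (hr_le N j) (by positivity)
      _ = 1 / (1 - c) := by ring
  rw [hcol]
  refine ⟨hxub j, ?_, ?_⟩
  · -- equality → all row sums 1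
    intro heq k
    by_contra hk
    have hklt : ∑ s, (A ^ k) j s < 1 := lt_of_le_of_ne (hr_le k j) hk
    have hid := hiter (k + 1)
    have hsum : (∑ m ∈ Finset.range (k+1), c ^ m * ∑ s, (A ^ m) j s)
        ≤ (∑ m ∈ Finset.range k, c ^ m) + c ^ k * ∑ s, (A ^ k) j s := by
      rw [Finset.sum_range_succ]
      gcongr with m hm
      calc c ^ m * ∑ s, (A ^ m) j s ≤ c ^ m * 1 := by
            exact mul_le_mul_of_nonneg_left (hr_le m j) (by positivity)
        _ = c ^ m := by ring
    set S := ∑ m ∈ Finset.range k, c ^ m with hSdef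
    set r := ∑ s, (A ^ k) j s with hrdef
    set T := ((A ^ (k+1)) *ᵥ x) j with hTdef
    have hck : (0:ℝ) < c ^ k := by positivity
    have hS : S * (1 - c) = 1 - c ^ k := by
      have := geom_sum_mul c k
      linear_combination (-1 : ℝ) * this
    have hT : T * (1 - c) ≤ 1 := by
      have := hAxN_ub (k + 1)
      rw [← hTdef] at this
      calc T * (1 - c) ≤ (1 / (1 - c)) * (1 - c) := by
            exact mul_le_mul_of_nonneg_right this h1c.le
        _ = 1 := by field_simp
    have hkey : x j * (1 - c) < 1 := by
      have e1 : x j * (1 - c)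
          = (∑ m ∈ Finset.range (k+1), c ^ m * ∑ s, (A ^ m) j s) * (1 - c)
            + c ^ (k+1) * (T * (1 - c)) := by
        rw [hid]; ring
      have e2 : (∑ m ∈ Finset.range (k+1), c ^ m * ∑ s, (A ^ m) j s) * (1 - c)
          ≤ (S + c ^ k * r) * (1 - c) :=
        mul_le_mul_of_nonneg_right hsum h1c.le
      have e3 : (S + c ^ k * r) * (1 - c) = (1 - c ^ k) + c ^ k * r * (1 - c) := by
        linear_combination hS
      have e4 : c ^ k * r * (1 - c) < c ^ k * (1 - c) := by
        have := mul_lt_mul_of_pos_left hklt (mul_pos hck h1c)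
        nlinarith
      have e5 : c ^ (k+1) * (T * (1 - c)) ≤ c ^ (k+1) * 1 :=
        mul_le_mul_of_nonneg_left hT (by positivity)
      have : c ^ (k+1) = c ^ k * c := by ring
      nlinarith
    have : x j * (1 - c) = 1 := by rw [heq]; field_simp
    linarith
  · -- all row sums 1 → equality
    intro h
    refine le_antisymm (hxub j) ?_
    by_contra hlt
    push_neg at hlt
    have hε : 0 < (1 / (1 - c) - x j) * (1 - c) := by
      have : 0 < 1 / (1 - c) - x j := by linarith
      positivity
    obtain ⟨N, hN⟩ := exists_pow_lt_of_lt_one hε hc1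
    have hid := hiter N
    have hgeo : ∑ m ∈ Finset.range N, c ^ m * ∑ s, (A ^ m) j s
        = ∑ m ∈ Finset.range N, c ^ m :=
      Finset.sum_congr rfl fun m _ => by rw [h m, mul_one]
    have hS : (∑ m ∈ Finset.range N, c ^ m) * (1 - c) = 1 - c ^ N := by
      have := geom_sum_mul c N
      linear_combination (-1 : ℝ) * this
    have h4 : ∑ m ∈ Finset.range N, c ^ m ≤ x j := by
      rw [hid, hgeo]
      have := mul_nonneg (pow_pos hc0 N).le (hAxN_nn N)
      linarith
    have hexp : (1 / (1 - c) - x j) * (1 - c) = 1 - x j * (1 - c) := by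
      field_simp
    rw [hexp] at hN
    have h5 : (∑ m ∈ Finset.range N, c ^ m) * (1 - c) ≤ x j * (1 - c) :=
      mul_le_mul_of_nonneg_right h4 h1c.le
    linarith
end
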